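/- arXiv:2106.10761 — 5 statements merged into one kernel-verified Lean document; each statement's English description precedes it below -/
import Mathlib

section
/- Let (Ω, ℱ, P) be a probability space, let 𝒢 ⊆ ℱ be a sub-σ-algebra, let Z : Ω → ℝ^d be an integrable random vector, and let R : Ω → ℝ^d be a 𝒢-measurable random vector. Suppose φ : [0,∞) → [0,1] is a function such that P(‖R − Z‖ > t) ≤ φ(t) for every t ≥ 0, where ‖·‖ is the Euclidean norm. Then for every α > 0 and every c with 0 < c < α, P(‖R − E[Z | 𝒢]‖ > α) ≤ (1/c) · ∫_{α−c}^{∞} φ(t) dt, where E[Z | 𝒢] denotes the conditional expectation of Z given 𝒢. -/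
open MeasureTheory
open scoped ENNReal NNReal

section AuxSAPA

variable {Ω : Type*} (𝒢 : MeasurableSpace Ω) {m₀ : MeasurableSpace Ω} (P : Measure Ω)
  [IsProbabilityMeasure P] {d : ℕ}

lemma aux_condexp_inner (h𝒢 : 𝒢 ≤ m₀) (F : Ω → EuclideanSpace ℝ (Fin d)) (hF : Integrable F P)
    (u : EuclideanSpace ℝ (Fin d)) :
    (fun ω => (inner ℝ u ((P[F|𝒢]) ω) : ℝ)) =ᵐ[P] P[fun ω => (inner ℝ u (F ω) : ℝ)|𝒢] := by
  refine ae_eq_condExp_of_forall_setIntegral_eq h𝒢 (hF.const_inner u) ?_ ?_ ?_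
  · intro s _ _
    exact (Integrable.const_inner u
      (integrable_condExp : Integrable (P[F|𝒢]) P)).integrableOn
  · intro s hs _
    rw [integral_inner
          (integrable_condExp : Integrable (P[F|𝒢]) P).integrableOn u,
        integral_inner hF.integrableOn u, setIntegral_condExp h𝒢 hF hs]
  · exact ((continuous_const.inner continuous_id).comp_stronglyMeasurable
      stronglyMeasurable_condExp).aestronglyMeasurable

lemma aux_norm_condexp (h𝒢 : 𝒢 ≤ m₀) (F : Ω → EuclideanSpace ℝ (Fin d))
    (hF : Integrable F P) :
    ∀ᵐ ω ∂P, ‖(P[F|𝒢]) ω‖ ≤ (P[fun ω => ‖F ω‖|𝒢]) ω := by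
  have h0 : 0 ≤ᵐ[P] P[fun ω => ‖F ω‖|𝒢] :=
    condExp_nonneg (ae_of_all _ fun ω => norm_nonneg (F ω))
  have key : ∀ u : EuclideanSpace ℝ (Fin d),
      ∀ᵐ ω ∂P, (inner ℝ u ((P[F|𝒢]) ω) : ℝ) ≤ ‖u‖ * (P[fun ω => ‖F ω‖|𝒢]) ω := by
    intro u
    have h1 := aux_condexp_inner 𝒢 P h𝒢 F hF u
    have h2 : (P[fun ω => (inner ℝ u (F ω) : ℝ)|𝒢]) ≤ᵐ[P] P[fun ω => ‖u‖ * ‖F ω‖|𝒢] := by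
      refine condExp_mono (hF.const_inner u) (hF.norm.const_mul _)
        (ae_of_all _ fun ω => real_inner_le_norm u (F ω))
    have h3 : (P[fun ω => ‖u‖ * ‖F ω‖|𝒢]) =ᵐ[P]
        fun ω => ‖u‖ * (P[fun ω => ‖F ω‖|𝒢]) ω := by
      have := condExp_smul (μ := P) (m := 𝒢) (‖u‖) (fun ω => ‖F ω‖)
      simpa [Pi.smul_def, smul_eq_mul] using this
    filter_upwards [h1, h2, h3] with ω e1 e2 e3
    calc (inner ℝ u ((P[F|𝒢]) ω) : ℝ) = (P[fun ω => (inner ℝ u (F ω) : ℝ)|𝒢]) ω := e1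
    _ ≤ (P[fun ω => ‖u‖ * ‖F ω‖|𝒢]) ω := e2
    _ = ‖u‖ * (P[fun ω => ‖F ω‖|𝒢]) ω := e3
  obtain ⟨D, hDc, hDd⟩ :=
    TopologicalSpace.exists_countable_dense (EuclideanSpace ℝ (Fin d))
  have hae : ∀ᵐ ω ∂P, ∀ u ∈ D,
      (inner ℝ u ((P[F|𝒢]) ω) : ℝ) ≤ ‖u‖ * (P[fun ω => ‖F ω‖|𝒢]) ω :=
    (ae_ball_iff hDc).2 fun u _ => key u
  filter_upwards [hae, h0] with ω hω h0ω
  have hall : ∀ u : EuclideanSpace ℝ (Fin d),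
      (inner ℝ u ((P[F|𝒢]) ω) : ℝ) ≤ ‖u‖ * (P[fun ω => ‖F ω‖|𝒢]) ω := by
    have hS : IsClosed {u : EuclideanSpace ℝ (Fin d) |
        (inner ℝ u ((P[F|𝒢]) ω) : ℝ) ≤ ‖u‖ * (P[fun ω => ‖F ω‖|𝒢]) ω} :=
      isClosed_le (continuous_id.inner continuous_const)
        (continuous_norm.mul continuous_const)
    intro u
    have h5 := hS.closure_subset_iff.2 fun v hv => hω v hv
    rw [hDd.closure_eq] at h5
    exact h5 (Set.mem_univ u)
  rcases eq_or_ne ((P[F|𝒢]) ω) 0 with h | h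
  · simpa [h] using h0ω
  · have := hall ((P[F|𝒢]) ω)
    rw [real_inner_self_eq_norm_mul_norm] at this
    exact le_of_mul_le_mul_left this (norm_pos_iff.2 h)

lemma aux_sapa (h𝒢 : 𝒢 ≤ m₀)
    (Z R : Ω → EuclideanSpace ℝ (Fin d))
    (hZ : Integrable Z P)
    (hR : StronglyMeasurable[𝒢] R)
    (φ : ℝ → ℝ)
    (hφ0 : ∀ t, 0 ≤ t → 0 ≤ φ t)
    (hφint : IntegrableOn φ (Set.Ioi 0))
    (hφ : ∀ t, 0 ≤ t → P {ω | t < ‖R ω - Z ω‖} ≤ ENNReal.ofReal (φ t))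
    (α c : ℝ) (hc : 0 < c) (hcα : c < α) :
    P {ω | α < ‖R ω - (P[Z|𝒢]) ω‖}
      ≤ ENNReal.ofReal ((1 / c) * ∫ t in Set.Ioi (α - c), φ t) := by
  set b : ℝ := α - c with hb_def
  have hb : 0 < b := by simp only [hb_def]; linarith
  set g : Ω → ℝ := fun ω => ‖R ω - Z ω‖ with hg_def
  have hgm : AEStronglyMeasurable g P :=
    (((hR.mono h𝒢).aestronglyMeasurable).sub hZ.1).norm
  have hg_nn : 0 ≤ᵐ[P] g := ae_of_all _ fun ω => norm_nonneg _
  -- tail bound on (0, ∞)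
  have hmono0 : ∀ᵐ t ∂(volume.restrict (Set.Ioi (0:ℝ))),
      P {ω | t < g ω} ≤ ENNReal.ofReal (φ t) :=
    (ae_restrict_iff' measurableSet_Ioi).2 (ae_of_all _ fun t ht => hφ t ht.le)
  have hφ_nn0 : 0 ≤ᵐ[volume.restrict (Set.Ioi (0:ℝ))] φ :=
    (ae_restrict_iff' measurableSet_Ioi).2 (ae_of_all _ fun t ht => hφ0 t ht.le)
  -- integrability of g
  have hint_g : Integrable g P := by
    refine ⟨hgm, ?_⟩
    rw [hasFiniteIntegral_iff_norm]
    calc ∫⁻ a, ENNReal.ofReal ‖g a‖ ∂P = ∫⁻ a, ENNReal.ofReal (g a) ∂P := by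
          simp only [hg_def, norm_norm]
      _ = ∫⁻ t in Set.Ioi (0:ℝ), P {ω | t < g ω} :=
          lintegral_eq_lintegral_meas_lt P hg_nn hgm.aemeasurable
      _ ≤ ∫⁻ t in Set.Ioi (0:ℝ), ENNReal.ofReal (φ t) := lintegral_mono_ae hmono0
      _ = ENNReal.ofReal (∫ t in Set.Ioi (0:ℝ), φ t) :=
          (ofReal_integral_eq_lintegral_ofReal hφint hφ_nn0).symm
      _ < ⊤ := ENNReal.ofReal_lt_top
  have hRZ : Integrable (fun ω => R ω - Z ω) P :=
    ⟨((hR.mono h𝒢).aestronglyMeasurable).sub hZ.1,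
      (hasFiniteIntegral_norm_iff _).1 hint_g.2⟩
  have hRint : Integrable R P := by
    have h := hRZ.add hZ
    have he : ((fun ω => R ω - Z ω) + Z) = R := by funext ω; simp
    rwa [he] at h
  -- Jensen
  have hJ := aux_norm_condexp 𝒢 P h𝒢 (fun ω => R ω - Z ω) hRZ
  have hsub : (P[fun ω => R ω - Z ω|𝒢]) =ᵐ[P] fun ω => R ω - (P[Z|𝒢]) ω := by
    have h1 := condExp_sub (μ := P) (m := 𝒢) hRint hZ
    have h2 : P[R|𝒢] = R := condExp_of_stronglyMeasurable h𝒢 hR hRint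
    refine h1.trans ?_
    rw [h2]
    rfl
  have hnorm : ∀ᵐ ω ∂P, ‖R ω - (P[Z|𝒢]) ω‖ ≤ (P[g|𝒢]) ω := by
    filter_upwards [hJ, hsub] with ω h1 h2
    rw [← h2]
    exact h1
  -- the positive part function
  set f : Ω → ℝ := fun ω => max (g ω - b) 0 with hf_def
  have hf_int : Integrable f P := (hint_g.sub (integrable_const b)).pos_part
  have hf_nn : 0 ≤ᵐ[P] f := ae_of_all _ fun ω => le_max_right _ _
  have hmono2 : (P[fun ω => g ω - b|𝒢]) ≤ᵐ[P] P[f|𝒢] :=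
    condExp_mono (hint_g.sub (integrable_const b)) hf_int
      (ae_of_all _ fun ω => le_max_left _ _)
  have hsubc : (P[fun ω => g ω - b|𝒢]) =ᵐ[P] fun ω => (P[g|𝒢]) ω - b := by
    have h1 := condExp_sub (μ := P) (m := 𝒢) hint_g (integrable_const b)
    have h2 : P[(fun _ => b : Ω → ℝ)|𝒢] = fun _ => b := condExp_const h𝒢 b
    refine h1.trans ?_
    rw [h2]
    rfl
  -- the event A
  have hA : MeasurableSet[𝒢] {ω | α < ‖R ω - (P[Z|𝒢]) ω‖} := by
    have hsm : StronglyMeasurable[𝒢] fun ω => ‖R ω - (P[Z|𝒢]) ω‖ :=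
      (hR.sub stronglyMeasurable_condExp).norm
    exact measurableSet_lt measurable_const hsm.measurable
  set A : Set Ω := {ω | α < ‖R ω - (P[Z|𝒢]) ω‖} with hA_def
  have hAm : MeasurableSet A := h𝒢 _ hA
  -- key pointwise bound on A
  have key : ∀ᵐ ω ∂P, ω ∈ A → c ≤ (P[f|𝒢]) ω := by
    filter_upwards [hnorm, hmono2, hsubc] with ω h1 h2 h3 hmem
    have hα' : α < (P[g|𝒢]) ω := lt_of_lt_of_le hmem h1
    have : c ≤ (P[g|𝒢]) ω - b := by simp only [hb_def]; linarith
    calc c ≤ (P[g|𝒢]) ω - b := this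
      _ = (P[fun ω => g ω - b|𝒢]) ω := h3.symm
      _ ≤ (P[f|𝒢]) ω := h2
  -- step 1 : c * P(A) ≤ ∫_A E[f|𝒢]
  have step1 : c * (P A).toReal ≤ ∫ ω in A, (P[f|𝒢]) ω ∂P := by
    have hle : (fun _ => c) ≤ᵐ[P.restrict A] P[f|𝒢] :=
      (ae_restrict_iff' hAm).2 key
    have h := setIntegral_mono_ae_restrict
      (integrableOn_const (measure_ne_top P A))
      ((integrable_condExp : Integrable (P[f|𝒢]) P).integrableOn) hle
    rwa [setIntegral_const, smul_eq_mul, mul_comm] at h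
  -- step 2 : ∫_A E[f|𝒢] = ∫_A f ≤ ∫ f
  have step2 : ∫ ω in A, (P[f|𝒢]) ω ∂P ≤ ∫ ω, f ω ∂P := by
    rw [setIntegral_condExp h𝒢 hf_int hA]
    exact setIntegral_le_integral hf_int hf_nn
  -- step 3 : ∫ f ≤ ∫_{Ioi b} φ
  have hIφ_nn : 0 ≤ ∫ t in Set.Ioi b, φ t :=
    setIntegral_nonneg measurableSet_Ioi fun t ht => hφ0 t (hb.le.trans (le_of_lt ht))
  have step3 : ∫ ω, f ω ∂P ≤ ∫ t in Set.Ioi b, φ t := by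
    rw [← ENNReal.ofReal_le_ofReal_iff hIφ_nn]
    set G : ℝ → ℝ≥0∞ := fun s => P {ω | s < g ω} with hG_def
    have hGanti : Antitone G := fun s s' hss' =>
      measure_mono fun ω hω => lt_of_le_of_lt hss' hω
    have hGm : Measurable G := hGanti.measurable
    have hmap : Measure.map (fun t => t + b) (volume.restrict (Set.Ioi (0:ℝ)))
        = volume.restrict (Set.Ioi b) := by
      have hpre : (fun t : ℝ => t + b) ⁻¹' Set.Ioi b = Set.Ioi 0 := by
        ext t; simp
      rw [← hpre, ← Measure.restrict_map (measurable_add_const b) measurableSet_Ioi,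
        map_add_right_eq_self volume b]
    calc ENNReal.ofReal (∫ ω, f ω ∂P)
        = ∫⁻ ω, ENNReal.ofReal (f ω) ∂P :=
          ofReal_integral_eq_lintegral_ofReal hf_int hf_nn
      _ = ∫⁻ t in Set.Ioi (0:ℝ), P {ω | t < f ω} :=
          lintegral_eq_lintegral_meas_lt P hf_nn hf_int.aemeasurable
      _ = ∫⁻ t in Set.Ioi (0:ℝ), G (t + b) := by
          refine lintegral_congr_ae ((ae_restrict_iff' measurableSet_Ioi).2
            (ae_of_all _ fun t ht => ?_))
          have hset : {ω | t < f ω} = {ω | t + b < g ω} := by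
            ext ω
            simp only [hf_def, Set.mem_setOf_eq, lt_max_iff]
            constructor
            · rintro (h | h)
              · linarith
              · exact absurd h (not_lt.2 ht.le)
            · intro h; left; linarith
          show P {ω | t < f ω} = G (t + b)
          rw [hset]
      _ = ∫⁻ s in Set.Ioi b, G s := by
          rw [← hmap, lintegral_map hGm (measurable_add_const b)]
      _ ≤ ∫⁻ s in Set.Ioi b, ENNReal.ofReal (φ s) := by
          refine lintegral_mono_ae ((ae_restrict_iff' measurableSet_Ioi).2
            (ae_of_all _ fun s hs => hφ s (hb.le.trans (le_of_lt hs))))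
      _ = ENNReal.ofReal (∫ s in Set.Ioi b, φ s) :=
          (ofReal_integral_eq_lintegral_ofReal
            (hφint.mono_set (Set.Ioi_subset_Ioi hb.le))
            ((ae_restrict_iff' measurableSet_Ioi).2
              (ae_of_all _ fun s hs => hφ0 s (hb.le.trans (le_of_lt hs))))).symm
  -- combine
  have hfinal : (P A).toReal ≤ (1 / c) * ∫ t in Set.Ioi b, φ t := by
    rw [one_div, inv_mul_eq_div, le_div_iff₀ hc]
    calc (P A).toReal * c = c * (P A).toReal := mul_comm _ _
      _ ≤ ∫ ω in A, (P[f|𝒢]) ω ∂P := step1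
      _ ≤ ∫ ω, f ω ∂P := step2
      _ ≤ ∫ t in Set.Ioi b, φ t := step3
  calc P A = ENNReal.ofReal ((P A).toReal) := (ENNReal.ofReal_toReal (measure_ne_top P A)).symm
    _ ≤ ENNReal.ofReal ((1 / c) * ∫ t in Set.Ioi b, φ t) := ENNReal.ofReal_le_ofReal hfinal

end AuxSAPA

/-- **Sample Accuracy implies Posterior Accuracy** (Lemma 3.1, abstract form).
If `P(‖R − Z‖ > t) ≤ φ(t)` for all `t ≥ 0`, with `R` measurable with respect to a
sub-σ-algebra `𝒢`, then for `0 < c < α`,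
`P(‖R − E[Z | 𝒢]‖ > α) ≤ (1/c) ∫_{α−c}^{∞} φ(t) dt`. -/
theorem sample_accuracy_implies_posterior_accuracy
    {Ω : Type*} {m₀ : MeasurableSpace Ω} (P : Measure Ω) [IsProbabilityMeasure P]
    (𝒢 : MeasurableSpace Ω) (h𝒢 : 𝒢 ≤ m₀) {d : ℕ}
    (Z R : Ω → EuclideanSpace ℝ (Fin d))
    (hZ : Integrable Z P)
    (hR : StronglyMeasurable[𝒢] R)
    (φ : ℝ → ℝ)
    (hφ0 : ∀ t, 0 ≤ t → 0 ≤ φ t) (hφ1 : ∀ t, 0 ≤ t → φ t ≤ 1)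
    (hφint : IntegrableOn φ (Set.Ioi 0))
    (hφ : ∀ t, 0 ≤ t → P {ω | t < ‖R ω - Z ω‖} ≤ ENNReal.ofReal (φ t))
    (α c : ℝ) (hα : 0 < α) (hc : 0 < c) (hcα : c < α) :
    P {ω | α < ‖R ω - (P[Z|𝒢]) ω‖}
      ≤ ENNReal.ofReal ((1 / c) * ∫ t in Set.Ioi (α - c), φ t) :=
  aux_sapa 𝒢 P h𝒢 Z R hZ hR φ hφ0 hφint hφ α c hc hcα
end

section
/- Let η > 0 and k ∈ ℕ, and define φ(t) := k·P(|ξ| > t) for t ≥ 0, where ξ is a centered Gaussian random variable with variance η². Then for every α ≥ √2·η, taking c = α − √(α² − 2η²) ∈ (0, α), one has (1/c)·∫_{α−c}^{∞} φ(t) dt ≤ (k·α/(√(2π)·η))·e^{1 − α²/(2η²)}. -/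
open MeasureTheory Real ProbabilityTheory Filter Set

noncomputable def gmpaF (η x : ℝ) : ℝ :=
  (Real.sqrt (2 * π) * η)⁻¹ * Real.exp (-(1 / (2 * η ^ 2)) * x ^ 2)

noncomputable def gmpaT (η t : ℝ) : ℝ := ∫ x in Set.Ioi t, gmpaF η x

section aux
variable {η : ℝ} (hη : 0 < η)

lemma gmpaF_cont : Continuous (gmpaF η) := by
  unfold gmpaF
  continuity

lemma gmpaF_even (x : ℝ) : gmpaF η (-x) = gmpaF η x := by simp [gmpaF]

include hη

lemma gmpaF_nonneg (x : ℝ) : 0 ≤ gmpaF η x := by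
  unfold gmpaF
  have := Real.sqrt_pos.2 (by positivity : (0:ℝ) < 2 * π)
  positivity

lemma gmpaF_pos (x : ℝ) : 0 < gmpaF η x := by
  unfold gmpaF
  have := Real.sqrt_pos.2 (by positivity : (0:ℝ) < 2 * π)
  positivity

lemma gmpaB_pos : 0 < 1 / (2 * η ^ 2) := by positivity

lemma gmpaF_integrable : Integrable (gmpaF η) := by
  exact (integrable_exp_neg_mul_sq (gmpaB_pos hη)).const_mul _

lemma gmpaF_le (x : ℝ) : gmpaF η x ≤ gmpaF η 0 := by
  unfold gmpaF
  have h0 : (0:ℝ) ≤ (Real.sqrt (2 * π) * η)⁻¹ := by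
    have := Real.sqrt_pos.2 (by positivity : (0:ℝ) < 2 * π)
    positivity
  refine mul_le_mul_of_nonneg_left ?_ h0
  rw [Real.exp_le_exp]
  have hb : 0 < 1 / (2 * η ^ 2) := by positivity
  nlinarith [sq_nonneg x]

lemma gmpaXF_integrable : Integrable (fun x => x * gmpaF η x) := by
  have h := (integrable_mul_exp_neg_mul_sq (gmpaB_pos hη)).const_mul
    ((Real.sqrt (2 * π) * η)⁻¹)
  refine h.congr (Filter.Eventually.of_forall fun x => ?_)
  simp only [gmpaF]
  ring

lemma gmpaF_hasDerivAt (x : ℝ) :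
    HasDerivAt (gmpaF η) (-(x / η ^ 2) * gmpaF η x) x := by
  have h1 := (hasDerivAt_pow 2 x).const_mul (-(1 / (2 * η ^ 2)))
  have h2 := (h1.exp).const_mul ((Real.sqrt (2 * π) * η)⁻¹)
  have h3 : HasDerivAt (gmpaF η)
      ((Real.sqrt (2 * π) * η)⁻¹ *
        (Real.exp (-(1 / (2 * η ^ 2)) * x ^ 2) * (-(1 / (2 * η ^ 2)) * (↑2 * x ^ (2 - 1))))) x := h2
  convert h3 using 1
  unfold gmpaF
  field_simp
  ring

lemma gmpaF_tendsto : Tendsto (gmpaF η) atTop (nhds 0) := by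
  have h1 : Tendsto (fun x : ℝ => -(1 / (2 * η ^ 2)) * x ^ 2) atTop atBot :=
    (tendsto_const_mul_atBot_of_neg (neg_neg_iff_pos.2 (by positivity) :
      -(1 / (2 * η ^ 2)) < (0:ℝ))).2
      (tendsto_pow_atTop two_ne_zero)
  have h2 : Tendsto (fun x : ℝ => Real.exp (-(1 / (2 * η ^ 2)) * x ^ 2)) atTop (nhds 0) :=
    Real.tendsto_exp_atBot.comp h1
  have h3 := h2.const_mul ((Real.sqrt (2 * π) * η)⁻¹)
  rw [mul_zero] at h3
  exact h3

lemma gmpa_integral_xF (t : ℝ) :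
    ∫ x in Set.Ioi t, x * gmpaF η x = η ^ 2 * gmpaF η t := by
  have hderiv : ∀ x ∈ Set.Ici t, HasDerivAt (fun y => -η ^ 2 * gmpaF η y) (x * gmpaF η x) x := by
    intro x _
    have h := (gmpaF_hasDerivAt hη x).const_mul (-η ^ 2)
    refine h.congr_deriv ?_
    field_simp
  have hint : IntegrableOn (fun x => x * gmpaF η x) (Set.Ioi t) :=
    (gmpaXF_integrable hη).integrableOn
  have htend : Tendsto (fun y => -η ^ 2 * gmpaF η y) atTop (nhds 0) := by
    have := (gmpaF_tendsto hη).const_mul (-η ^ 2)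
    rwa [mul_zero] at this
  have := integral_Ioi_of_hasDerivAt_of_tendsto' hderiv hint htend
  rw [this]
  ring

lemma gmpaT_nonneg (t : ℝ) : 0 ≤ gmpaT η t :=
  setIntegral_nonneg measurableSet_Ioi fun x _ => gmpaF_nonneg hη x

lemma gmpaT_mul_le {t : ℝ} (ht : 0 ≤ t) : t * gmpaT η t ≤ η ^ 2 * gmpaF η t := by
  rw [← gmpa_integral_xF hη t]
  unfold gmpaT
  rw [← integral_const_mul]
  refine setIntegral_mono_on ((gmpaF_integrable hη).integrableOn.const_mul t)
    (gmpaXF_integrable hη).integrableOn measurableSet_Ioi fun x hx => ?_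
  have hx' : t ≤ x := (le_of_lt hx)
  exact mul_le_mul_of_nonneg_right hx' (gmpaF_nonneg hη x)

lemma gmpa_split {a b : ℝ} (h : a ≤ b) :
    ∫ x in Set.Ioi a, gmpaF η x =
      (∫ x in Set.Ioc a b, gmpaF η x) + ∫ x in Set.Ioi b, gmpaF η x := by
  have h1 : IntegrableOn (gmpaF η) (Set.Ioc a b) := (gmpaF_integrable hη).integrableOn
  have h2 : IntegrableOn (gmpaF η) (Set.Ioi b) := (gmpaF_integrable hη).integrableOn
  rw [← setIntegral_union (Set.Ioc_disjoint_Ioi le_rfl) measurableSet_Ioi h1 h2,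
    Set.Ioc_union_Ioi_eq_Ioi h]

lemma gmpaT_eq (t : ℝ) : gmpaT η t = gmpaT η 0 - ∫ u in (0:ℝ)..t, gmpaF η u := by
  rcases le_or_gt 0 t with h | h
  · rw [intervalIntegral.integral_of_le h]
    have := gmpa_split hη h
    unfold gmpaT
    rw [this]
    ring
  · rw [intervalIntegral.integral_symm, intervalIntegral.integral_of_le h.le]
    have := gmpa_split hη h.le
    unfold gmpaT
    rw [this]
    ring

lemma gmpaT_hasDerivAt (t : ℝ) : HasDerivAt (gmpaT η) (-(gmpaF η t)) t := by
  have hfun : gmpaT η = fun t => gmpaT η 0 - ∫ u in (0:ℝ)..t, gmpaF η u :=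
    funext fun t => gmpaT_eq hη t
  rw [hfun]
  have hFTC : HasDerivAt (fun t => ∫ u in (0:ℝ)..t, gmpaF η u) (gmpaF η t) t :=
    intervalIntegral.integral_hasDerivAt_right
      ((gmpaF_cont (η := η)).intervalIntegrable 0 t)
      ((gmpaF_cont (η := η)).stronglyMeasurableAtFilter _ _)
      (gmpaF_cont (η := η)).continuousAt
  simpa using hFTC.const_sub (gmpaT η 0)

lemma gmpaT_cont : Continuous (gmpaT η) :=
  continuous_iff_continuousAt.2 fun t => (gmpaT_hasDerivAt hη t).continuousAt

lemma gmpaT_mul_tendsto : Tendsto (fun t => t * gmpaT η t) atTop (nhds 0) := by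
  have hg : Tendsto (fun t => η ^ 2 * gmpaF η t) atTop (nhds 0) := by
    have := (gmpaF_tendsto hη).const_mul (η ^ 2)
    rwa [mul_zero] at this
  refine squeeze_zero' ?_ ?_ hg
  · filter_upwards [eventually_ge_atTop (0:ℝ)] with t ht
    exact mul_nonneg ht (gmpaT_nonneg hη t)
  · filter_upwards [eventually_ge_atTop (0:ℝ)] with t ht
    exact gmpaT_mul_le hη ht

lemma gmpaT_integrableOn (a : ℝ) : IntegrableOn (gmpaT η) (Set.Ioi a) := by
  have hM : a ≤ max a 1 := le_max_left a 1
  have hsplit : Set.Ioi a = Set.Ioc a (max a 1) ∪ Set.Ioi (max a 1) :=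
    (Set.Ioc_union_Ioi_eq_Ioi hM).symm
  rw [hsplit]
  refine IntegrableOn.union ?_ ?_
  · exact (gmpaT_cont hη).integrableOn_Ioc
  · refine Integrable.mono' (((gmpaF_integrable hη).const_mul (η ^ 2)).integrableOn)
      ((gmpaT_cont hη).aestronglyMeasurable.restrict) ?_
    filter_upwards [ae_restrict_mem measurableSet_Ioi] with t ht
    have ht1 : (1:ℝ) ≤ t := (le_max_right a 1).trans (le_of_lt ht)
    have ht0 : (0:ℝ) ≤ t := zero_le_one.trans ht1
    rw [Real.norm_of_nonneg (gmpaT_nonneg hη t)]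
    calc gmpaT η t = 1 * gmpaT η t := (one_mul _).symm
      _ ≤ t * gmpaT η t := mul_le_mul_of_nonneg_right ht1 (gmpaT_nonneg hη t)
      _ ≤ η ^ 2 * gmpaF η t := gmpaT_mul_le hη ht0

lemma gmpa_integral_T (a : ℝ) :
    ∫ t in Set.Ioi a, gmpaT η t = η ^ 2 * gmpaF η a - a * gmpaT η a := by
  have hderiv : ∀ t ∈ Set.Ici a,
      HasDerivAt (fun t => t * gmpaT η t - η ^ 2 * gmpaF η t) (gmpaT η t) t := by
    intro t _
    have h1 : HasDerivAt (fun t => t * gmpaT η t) (1 * gmpaT η t + t * -(gmpaF η t)) t :=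
      (hasDerivAt_id t).mul (gmpaT_hasDerivAt hη t)
    have h2 : HasDerivAt (fun t => η ^ 2 * gmpaF η t) (η ^ 2 * (-(t / η ^ 2) * gmpaF η t)) t :=
      (gmpaF_hasDerivAt hη t).const_mul (η ^ 2)
    have h3 := h1.sub h2
    refine h3.congr_deriv ?_
    field_simp
    ring
  have htend : Tendsto (fun t => t * gmpaT η t - η ^ 2 * gmpaF η t) atTop (nhds 0) := by
    have h1 := (gmpaT_mul_tendsto hη).sub ((gmpaF_tendsto hη).const_mul (η ^ 2))
    rwa [mul_zero, sub_zero] at h1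
  have := integral_Ioi_of_hasDerivAt_of_tendsto' hderiv (gmpaT_integrableOn hη a) htend
  rw [this]
  ring

lemma gmpaT_zero : gmpaT η 0 = 1 / 2 := by
  unfold gmpaT gmpaF
  rw [integral_const_mul, integral_gaussian_Ioi]
  have h1 : π / (1 / (2 * η ^ 2)) = 2 * π * η ^ 2 := by
    field_simp
  rw [h1]
  have h2 : Real.sqrt (2 * π * η ^ 2) = Real.sqrt (2 * π) * η := by
    rw [Real.sqrt_mul (by positivity), Real.sqrt_sq hη.le]
  rw [h2]
  have h3 : Real.sqrt (2 * π) * η ≠ 0 := by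
    have := Real.sqrt_pos.2 (by positivity : (0:ℝ) < 2 * π)
    positivity
  field_simp

lemma gmpaT_ge_A {t : ℝ} (ht : 0 ≤ t) :
    η ^ 2 * t / (t ^ 2 + η ^ 2) * gmpaF η t ≤ gmpaT η t := by
  have hden : ∀ x : ℝ, (0:ℝ) < x ^ 2 + η ^ 2 := fun x => by positivity
  set E : ℝ → ℝ := fun x => (η ^ 4 - 2 * η ^ 2 * x ^ 2 - x ^ 4) / (x ^ 2 + η ^ 2) ^ 2 with hE
  set h : ℝ → ℝ := fun x => η ^ 2 * x / (x ^ 2 + η ^ 2) * gmpaF η x with hh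
  have hEabs : ∀ x : ℝ, |E x| ≤ 1 := by
    intro x
    rw [hE, abs_div, abs_of_pos (by positivity : (0:ℝ) < (x ^ 2 + η ^ 2) ^ 2),
      div_le_one (by positivity)]
    rw [abs_le]
    constructor <;> nlinarith [sq_nonneg x, sq_nonneg η, sq_nonneg (x * η), sq_nonneg (x ^ 2)]
  have hD : ∀ x : ℝ, HasDerivAt h (gmpaF η x * E x) x := by
    intro x
    have hu : HasDerivAt (fun y : ℝ => η ^ 2 * y) (η ^ 2 * 1) x :=
      (hasDerivAt_id x).const_mul (η ^ 2)
    have hv : HasDerivAt (fun y : ℝ => y ^ 2 + η ^ 2) (2 * x ^ 1) x := by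
      simpa using (hasDerivAt_pow 2 x).add_const (η ^ 2)
    have hp := hu.div hv (hden x).ne'
    have hm := hp.mul (gmpaF_hasDerivAt hη x)
    refine hm.congr_deriv ?_
    rw [hE]
    simp only [Pi.div_apply]
    field_simp
    ring
  have hcontE : Continuous E := by
    refine Continuous.div (by continuity) (by continuity) fun x => ?_
    exact (by positivity : (0:ℝ) < (x ^ 2 + η ^ 2) ^ 2).ne'
  have hDint : IntegrableOn (fun x => gmpaF η x * E x) (Set.Ioi t) := by
    refine Integrable.mono' (gmpaF_integrable hη).integrableOn
      (((gmpaF_cont (η := η)).mul hcontE).aestronglyMeasurable.restrict) ?_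
    refine Filter.Eventually.of_forall fun x => ?_
    rw [norm_mul, Real.norm_of_nonneg (gmpaF_nonneg hη x)]
    calc gmpaF η x * ‖E x‖ ≤ gmpaF η x * 1 :=
          mul_le_mul_of_nonneg_left (hEabs x) (gmpaF_nonneg hη x)
      _ = gmpaF η x := mul_one _
  have htend : Tendsto h atTop (nhds 0) := by
    have hg : Tendsto (fun x => η / 2 * gmpaF η x) atTop (nhds 0) := by
      have := (gmpaF_tendsto hη).const_mul (η / 2)
      rwa [mul_zero] at this
    refine squeeze_zero' ?_ ?_ hg
    · filter_upwards [eventually_ge_atTop (0:ℝ)] with x hx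
      rw [hh]
      have : (0:ℝ) ≤ η ^ 2 * x / (x ^ 2 + η ^ 2) := by positivity
      exact mul_nonneg this (gmpaF_nonneg hη x)
    · filter_upwards [eventually_ge_atTop (0:ℝ)] with x hx
      rw [hh]
      refine mul_le_mul_of_nonneg_right ?_ (gmpaF_nonneg hη x)
      rw [div_le_iff₀ (hden x)]
      nlinarith [sq_nonneg (x - η)]
  have hint : ∫ x in Set.Ioi t, gmpaF η x * E x = 0 - h t :=
    integral_Ioi_of_hasDerivAt_of_tendsto' (fun x _ => hD x) hDint htend
  have hmono : ∫ x in Set.Ioi t, -(gmpaF η x * E x) ≤ ∫ x in Set.Ioi t, gmpaF η x := by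
    refine setIntegral_mono_on hDint.neg (gmpaF_integrable hη).integrableOn
      measurableSet_Ioi fun x _ => ?_
    have h1 : -(E x) ≤ 1 := (abs_le.1 (hEabs x)).1 |> neg_le.1 |>.trans le_rfl
    calc -(gmpaF η x * E x) = gmpaF η x * (-(E x)) := by ring
      _ ≤ gmpaF η x * 1 := mul_le_mul_of_nonneg_left h1 (gmpaF_nonneg hη x)
      _ = gmpaF η x := mul_one _
  rw [integral_neg, hint] at hmono
  unfold gmpaT
  rw [hh] at hmono
  simpa using hmono

lemma gmpaT_ge_B {t : ℝ} (ht : 0 ≤ t) :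
    1 / 2 - t * gmpaF η 0 ≤ gmpaT η t := by
  have hsplit := gmpa_split hη ht
  have h0 : gmpaT η 0 = (∫ x in Set.Ioc 0 t, gmpaF η x) + gmpaT η t := hsplit
  have hub : ∫ x in Set.Ioc 0 t, gmpaF η x ≤ t * gmpaF η 0 := by
    have hle : ∫ x in Set.Ioc 0 t, gmpaF η x ≤ ∫ _x in Set.Ioc (0:ℝ) t, gmpaF η 0 :=
      setIntegral_mono_on (gmpaF_integrable hη).integrableOn
        (integrableOn_const (by simp [Real.volume_Ioc]))
        measurableSet_Ioc fun x _ => gmpaF_le hη x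
    have hconst : ∫ _x in Set.Ioc (0:ℝ) t, gmpaF η 0 = t * gmpaF η 0 := by
      rw [setIntegral_const, Real.volume_real_Ioc_of_le ht, smul_eq_mul]
      ring_nf
    linarith [hle, hconst ▸ hle]
  have := gmpaT_zero hη
  linarith

lemma gmpa_pdf_eq : gaussianPDFReal 0 ⟨η ^ 2, sq_nonneg η⟩ = gmpaF η := by
  funext x
  unfold gaussianPDFReal gmpaF
  change (Real.sqrt (2 * π * η ^ 2))⁻¹ * Real.exp (-(x - 0) ^ 2 / (2 * η ^ 2)) = _
  have h2 : Real.sqrt (2 * π * η ^ 2) = Real.sqrt (2 * π) * η := by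
    rw [Real.sqrt_mul (by positivity), Real.sqrt_sq hη.le]
  rw [h2]
  congr 1
  rw [sub_zero]
  ring

lemma gmpa_var_ne : (⟨η ^ 2, sq_nonneg η⟩ : NNReal) ≠ 0 := by
  intro h
  have : ((⟨η ^ 2, sq_nonneg η⟩ : NNReal) : ℝ) = 0 := by rw [h]; rfl
  exact (by positivity : (0:ℝ) < η ^ 2).ne' this

lemma gmpa_meas (s : Set ℝ) :
    ((gaussianReal 0 ⟨η ^ 2, sq_nonneg η⟩) s).toReal = ∫ x in s, gmpaF η x := by
  rw [gaussianReal_apply_eq_integral 0 (gmpa_var_ne hη) s, gmpa_pdf_eq hη,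
    ENNReal.toReal_ofReal (integral_nonneg fun x => gmpaF_nonneg hη x)]

lemma gmpa_meas_abs {t : ℝ} (ht : 0 ≤ t) :
    ((gaussianReal 0 ⟨η ^ 2, sq_nonneg η⟩) {x | t < |x|}).toReal = 2 * gmpaT η t := by
  have hset : {x : ℝ | t < |x|} = Set.Iio (-t) ∪ Set.Ioi t := by
    ext x
    simp only [Set.mem_setOf_eq, Set.mem_union, Set.mem_Iio, Set.mem_Ioi, lt_abs]
    constructor
    · rintro (h | h)
      · exact Or.inr h
      · exact Or.inl (by linarith)
    · rintro (h | h)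
      · exact Or.inr (by linarith)
      · exact Or.inl h
  have hdisj : Disjoint (Set.Iio (-t)) (Set.Ioi t) := by
    refine Set.disjoint_left.2 fun x hx hx' => ?_
    simp only [Set.mem_Iio] at hx
    simp only [Set.mem_Ioi] at hx'
    linarith
  rw [gmpa_meas hη, hset,
    setIntegral_union hdisj measurableSet_Ioi (gmpaF_integrable hη).integrableOn
      (gmpaF_integrable hη).integrableOn]
  have hrefl : ∫ x in Set.Iio (-t), gmpaF η x = ∫ x in Set.Ioi t, gmpaF η x := by
    rw [setIntegral_congr_set (Iio_ae_eq_Iic), ← integral_comp_neg_Ioi]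
    exact setIntegral_congr_fun measurableSet_Ioi fun x _ => gmpaF_even x
  rw [hrefl]
  unfold gmpaT
  ring

end aux

set_option maxHeartbeats 2000000 in
/-- **Posterior accuracy of the Gaussian mechanism** (Lemma 3.3, posterior-accuracy part,
analytic computation). For `phi(t) = k·P(|xi| > t)` with `ξ ~ N(0, η²)`, every `α ≥ √2·η`,
and `c = α − √(α² − 2η²)`, one has
`(1/c) ∫_{α−c}^{∞} φ(t) dt ≤ (kα/(√(2π)η))·e^{1−α²/(2η²)}`. -/
theorem gaussian_mechanism_posterior_accuracy
    (η : ℝ) (hη : 0 < η) (k : ℕ) (α : ℝ) (hα : Real.sqrt 2 * η ≤ α) :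
    (1 / (α - Real.sqrt (α ^ 2 - 2 * η ^ 2))) *
        ∫ t in Set.Ioi (α - (α - Real.sqrt (α ^ 2 - 2 * η ^ 2))),
          (k : ℝ) * ((gaussianReal 0 ⟨η ^ 2, sq_nonneg η⟩) {x | t < |x|}).toReal
      ≤ (k * α / (Real.sqrt (2 * π) * η)) * Real.exp (1 - α ^ 2 / (2 * η ^ 2)) := by
  have hs : 0 < Real.sqrt (2 * π) := Real.sqrt_pos.2 (by positivity)
  have hsq2 : (Real.sqrt 2) ^ 2 = 2 := Real.sq_sqrt (by norm_num)
  have hsqrt2_pos : 0 < Real.sqrt 2 := Real.sqrt_pos.2 (by norm_num)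
  have hα0 : 0 < α := lt_of_lt_of_le (by positivity) hα
  have h2 : 2 * η ^ 2 ≤ α ^ 2 := by nlinarith [mul_le_mul_of_nonneg_left hα (by positivity : (0:ℝ) ≤ Real.sqrt 2 * η)]
  set β := Real.sqrt (α ^ 2 - 2 * η ^ 2) with hβdef
  have hβ0 : 0 ≤ β := Real.sqrt_nonneg _
  have hβsq : β ^ 2 = α ^ 2 - 2 * η ^ 2 := Real.sq_sqrt (by linarith)
  have hβα : β < α := by nlinarith
  have hc : 0 < α - β := by linarith
  have hsum : 0 < α + β := by linarith
  have hαβ : (α - β) * (α + β) = 2 * η ^ 2 := by nlinarith [hβsq]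
  rw [sub_sub_cancel]
  set G := gmpaF η β with hG
  have hGpos : 0 < G := gmpaF_pos hη β
  set T := gmpaT η β with hT'
  have hTnn : 0 ≤ T := gmpaT_nonneg hη β
  -- rewrite the integral
  have hint : (∫ t in Set.Ioi β,
      (k : ℝ) * ((gaussianReal 0 ⟨η ^ 2, sq_nonneg η⟩) {x | t < |x|}).toReal)
      = (k : ℝ) * (2 * (η ^ 2 * G - β * T)) := by
    rw [integral_const_mul]
    congr 1
    have heq : ∀ t ∈ Set.Ioi β,
        ((gaussianReal 0 ⟨η ^ 2, sq_nonneg η⟩) {x | t < |x|}).toReal = 2 * gmpaT η t :=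
      fun t ht => gmpa_meas_abs hη (hβ0.trans (le_of_lt ht))
    rw [setIntegral_congr_fun measurableSet_Ioi heq, integral_const_mul,
      gmpa_integral_T hη β]
  rw [hint]
  -- rewrite the RHS exponential
  have harg : -(1 / (2 * η ^ 2)) * β ^ 2 = 1 - α ^ 2 / (2 * η ^ 2) := by
    rw [hβsq]; field_simp; ring
  have hexp : Real.exp (1 - α ^ 2 / (2 * η ^ 2)) = Real.sqrt (2 * π) * η * G := by
    rw [hG]
    unfold gmpaF
    rw [harg, ← mul_assoc, mul_inv_cancel₀ (by positivity : Real.sqrt (2 * π) * η ≠ 0), one_mul]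
  rw [hexp]
  -- the key inequality
  have hT2 : β * ((α - β) * G) ≤ β * (2 * T) := by
    rcases eq_or_lt_of_le hβ0 with h0 | hpos
    · rw [← h0]; simp
    · refine mul_le_mul_of_nonneg_left ?_ hβ0
      rcases le_or_gt (η ^ 2) (α * β) with hcase | hcase
      · -- use gmpaT_ge_A
        have hA := gmpaT_ge_A hη hβ0
        rw [← hG, ← hT'] at hA
        have hd : (0:ℝ) < β ^ 2 + η ^ 2 := by positivity
        have hA' : η ^ 2 * β * G ≤ (β ^ 2 + η ^ 2) * T := by
          rw [div_mul_eq_mul_div, div_le_iff₀ hd] at hA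
          linarith [hA]
        have hcan : 0 < (β ^ 2 + η ^ 2) * (α + β) := by positivity
        rw [← mul_le_mul_iff_of_pos_right hcan]
        have e1 : (α - β) * G * ((β ^ 2 + η ^ 2) * (α + β))
            = 2 * η ^ 2 * (G * (β ^ 2 + η ^ 2)) := by
          calc (α - β) * G * ((β ^ 2 + η ^ 2) * (α + β))
              = ((α - β) * (α + β)) * (G * (β ^ 2 + η ^ 2)) := by ring
            _ = 2 * η ^ 2 * (G * (β ^ 2 + η ^ 2)) := by rw [hαβ]
        have e2 : 2 * η ^ 2 * (G * (β ^ 2 + η ^ 2)) ≤ 2 * η ^ 2 * (G * (β * (α + β))) := by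
          refine mul_le_mul_of_nonneg_left ?_ (by positivity)
          refine mul_le_mul_of_nonneg_left ?_ hGpos.le
          nlinarith [hcase]
        have e3 : 2 * η ^ 2 * (G * (β * (α + β))) ≤ 2 * T * ((β ^ 2 + η ^ 2) * (α + β)) := by
          nlinarith [mul_le_mul_of_nonneg_right hA' (show (0:ℝ) ≤ 2 * (α + β) by positivity)]
        linarith [e1.le.trans (e2.trans e3)]
      · -- use gmpaT_ge_B
        have hB := gmpaT_ge_B hη hβ0
        rw [← hT'] at hB
        have hgf0 : gmpaF η 0 = (Real.sqrt (2 * π) * η)⁻¹ := by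
          unfold gmpaF; norm_num
        have hsη : 0 < Real.sqrt (2 * π) * η := by positivity
        have hb2 : Real.sqrt 2 * β ≤ η := by
          nlinarith [mul_le_mul_of_nonneg_right hα hβ0]
        have hs25 : (2.5 : ℝ) ≤ Real.sqrt (2 * π) := by
          rw [show (2.5:ℝ) = Real.sqrt (2.5 ^ 2) from (Real.sqrt_sq (by norm_num)).symm]
          exact Real.sqrt_le_sqrt (by nlinarith [Real.pi_gt_d6])
        have hsqrt2_hi : Real.sqrt 2 ≤ 1.415 := by
          nlinarith [hsq2, hsqrt2_pos]
        have hsqrt2_lo : (1.414 : ℝ) ≤ Real.sqrt 2 := by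
          nlinarith [hsq2, hsqrt2_pos]
        -- key quadratic inequality
        have hq : η ^ 2 ≤ (Real.sqrt (2 * π) * η / 2 - β) * (α + β) := by
          have hβη : Real.sqrt 2 * β ≤ η := hb2
          have h1 : (Real.sqrt (2 * π) * η / 2 - β) * (α + β)
              ≥ (1.25 * η - β) * (Real.sqrt 2 * η + β) := by
            have hfac1 : (1.25 : ℝ) * η - β ≤ Real.sqrt (2 * π) * η / 2 - β := by
              nlinarith [hs25]
            have hfac1' : (0:ℝ) ≤ 1.25 * η - β := by nlinarith [hb2, hsqrt2_lo]
            have hfac2 : Real.sqrt 2 * η + β ≤ α + β := by nlinarith [hα]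
            have hfac2' : (0:ℝ) ≤ Real.sqrt 2 * η + β := by positivity
            nlinarith [mul_le_mul hfac1 hfac2 hfac2' (by linarith)]
          have h2' : η ^ 2 ≤ (1.25 * η - β) * (Real.sqrt 2 * η + β) := by
            nlinarith [mul_nonneg (show (0:ℝ) ≤ η - Real.sqrt 2 * β by linarith) hβ0,
              mul_nonneg (show (0:ℝ) ≤ η - Real.sqrt 2 * β by linarith) hη.le,
              hsqrt2_lo, hsqrt2_hi, hsq2, mul_nonneg hβ0 hβ0, mul_nonneg hβ0 hη.le]
          linarith
        -- assemble
        have hGs : G * (Real.sqrt (2 * π) * η) ≤ 1 := by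
          have hle : G ≤ (Real.sqrt (2 * π) * η)⁻¹ := by
            rw [hG, ← hgf0]; exact gmpaF_le hη β
          calc G * (Real.sqrt (2 * π) * η)
              ≤ (Real.sqrt (2 * π) * η)⁻¹ * (Real.sqrt (2 * π) * η) :=
                mul_le_mul_of_nonneg_right hle hsη.le
            _ = 1 := inv_mul_cancel₀ hsη.ne'
        have hB2 : Real.sqrt (2 * π) * η - 2 * β ≤ 2 * T * (Real.sqrt (2 * π) * η) := by
          rw [hgf0] at hB
          have h2' := mul_le_mul_of_nonneg_right hB (show (0:ℝ) ≤ 2 * (Real.sqrt (2 * π) * η)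
            by positivity)
          have hinv : β * (Real.sqrt (2 * π) * η)⁻¹ * (2 * (Real.sqrt (2 * π) * η))
              = 2 * β := by
            field_simp
          nlinarith [h2', hinv]
        have hcan : 0 < (Real.sqrt (2 * π) * η) * (α + β) := by positivity
        rw [← mul_le_mul_iff_of_pos_right hcan]
        have e1 : (α - β) * G * ((Real.sqrt (2 * π) * η) * (α + β))
            = 2 * η ^ 2 * (G * (Real.sqrt (2 * π) * η)) := by
          calc (α - β) * G * ((Real.sqrt (2 * π) * η) * (α + β))
              = ((α - β) * (α + β)) * (G * (Real.sqrt (2 * π) * η)) := by ring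
            _ = 2 * η ^ 2 * (G * (Real.sqrt (2 * π) * η)) := by rw [hαβ]
        have e2 : 2 * η ^ 2 * (G * (Real.sqrt (2 * π) * η)) ≤ 2 * η ^ 2 := by
          nlinarith [hGs]
        have e3 : 2 * η ^ 2 ≤ 2 * T * ((Real.sqrt (2 * π) * η) * (α + β)) := by
          nlinarith [hq, mul_le_mul_of_nonneg_right hB2 hsum.le]
        linarith [e1.le.trans (e2.trans e3)]
  have hcoef : 2 * η ^ 2 - β * (α - β) = (α - β) * α := by nlinarith [hβsq]
  have hkey : 2 * (η ^ 2 * G - β * T) ≤ (α - β) * (α * G) := by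
    have hrw : 2 * η ^ 2 * G - β * ((α - β) * G) = (α - β) * (α * G) := by
      have : (2 * η ^ 2 - β * (α - β)) * G = ((α - β) * α) * G := by rw [hcoef]
      nlinarith [this]
    linarith [hT2, hrw]
  calc (1 / (α - β)) * ((k : ℝ) * (2 * (η ^ 2 * G - β * T)))
      ≤ (1 / (α - β)) * ((k : ℝ) * ((α - β) * (α * G))) := by
        refine mul_le_mul_of_nonneg_left ?_ (by positivity)
        exact mul_le_mul_of_nonneg_left hkey (Nat.cast_nonneg k)
    _ = (k : ℝ) * α * G := by field_simp
    _ = ↑k * α / (Real.sqrt (2 * π) * η) * (Real.sqrt (2 * π) * η * G) := by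
        field_simp
end

section
/- Let α, β ≥ 0 with α + β > 0, let R be a countable type, and let p₀, p₁ be probability mass functions on R such that p₀(r) ≤ e^{α+β}·p₁(r) for every r ∈ R (that is, the max divergence D_∞(p₀‖p₁) ≤ α + β). Then the mixture p' := ((e^β − 1)/(e^{α+β} − 1))·p₀ + ((e^{α+β} − e^β)/(e^{α+β} − 1))·p₁ is a probability mass function on R satisfying p₀(r) ≤ e^{α}·p'(r) and p'(r) ≤ e^{β}·p₁(r) for every r ∈ R; hence there exists a distribution p' with D_∞(p₀‖p') ≤ α and D_∞(p'‖p₁) ≤ β. -/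
/-- **Max divergence interpolation** (Lemma D.3).
If `p₀(r) ≤ e^{α+β}·p₁(r)` for all `r`, then the explicit mixture `p'` is a probability
mass function with `p₀(r) ≤ e^{α}·p'(r)` and `p'(r) ≤ e^{β}·p₁(r)` for all `r`. -/
theorem max_divergence_interpolation
    {R : Type*} [Countable R]
    (α β : ℝ) (hα : 0 ≤ α) (hβ : 0 ≤ β) (hαβ : 0 < α + β)
    (p₀ p₁ : R → ℝ)
    (hp₀0 : ∀ r, 0 ≤ p₀ r) (hp₁0 : ∀ r, 0 ≤ p₁ r)
    (hp₀1 : ∑' r, p₀ r = 1) (hp₁1 : ∑' r, p₁ r = 1)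
    (hdiv : ∀ r, p₀ r ≤ Real.exp (α + β) * p₁ r) :
    let p' : R → ℝ := fun r =>
      ((Real.exp β - 1) / (Real.exp (α + β) - 1)) * p₀ r
        + ((Real.exp (α + β) - Real.exp β) / (Real.exp (α + β) - 1)) * p₁ r
    (∀ r, 0 ≤ p' r) ∧ (∑' r, p' r = 1)
      ∧ (∀ r, p₀ r ≤ Real.exp α * p' r) ∧ (∀ r, p' r ≤ Real.exp β * p₁ r) := by
  intro p'
  have hE1 : 1 < Real.exp (α + β) := by nlinarith [Real.add_one_le_exp (α+β)]
  have hD : 0 < Real.exp (α + β) - 1 := by linarith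
  have hβ1 : 1 ≤ Real.exp β := Real.one_le_exp hβ
  have hβE : Real.exp β ≤ Real.exp (α + β) := Real.exp_le_exp.mpr (by linarith)
  have ha : 0 ≤ (Real.exp β - 1) / (Real.exp (α + β) - 1) :=
    div_nonneg (by linarith) hD.le
  have hb : 0 ≤ (Real.exp (α + β) - Real.exp β) / (Real.exp (α + β) - 1) :=
    div_nonneg (by linarith) hD.le
  have hsum0 : Summable p₀ := by
    by_contra h
    rw [tsum_eq_zero_of_not_summable h] at hp₀1
    norm_num at hp₀1
  have hsum1 : Summable p₁ := by
    by_contra h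
    rw [tsum_eq_zero_of_not_summable h] at hp₁1
    norm_num at hp₁1
  have hEab : Real.exp α * Real.exp β = Real.exp (α + β) := (Real.exp_add α β).symm
  refine ⟨fun r => add_nonneg (mul_nonneg ha (hp₀0 r)) (mul_nonneg hb (hp₁0 r)), ?_, ?_, ?_⟩
  · have : ∑' r, p' r
        = ((Real.exp β - 1) / (Real.exp (α + β) - 1)) * ∑' r, p₀ r
          + ((Real.exp (α + β) - Real.exp β) / (Real.exp (α + β) - 1)) * ∑' r, p₁ r := by
      rw [Summable.tsum_add (hsum0.mul_left _) (hsum1.mul_left _), tsum_mul_left, tsum_mul_left]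
    rw [this, hp₀1, hp₁1]
    field_simp
    ring
  · intro r
    have h1 := hdiv r
    have h0 := hp₀0 r
    have hEpos := Real.exp_pos α
    show p₀ r ≤ Real.exp α * ((Real.exp β - 1) / (Real.exp (α + β) - 1) * p₀ r
        + (Real.exp (α + β) - Real.exp β) / (Real.exp (α + β) - 1) * p₁ r)
    rw [div_mul_eq_mul_div, div_mul_eq_mul_div, ← add_div, mul_div_assoc',
      le_div_iff₀ hD]
    have hα1 : 1 ≤ Real.exp α := Real.one_le_exp hα
    rw [← hEab] at h1 ⊢
    nlinarith [mul_le_mul_of_nonneg_left h1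
        (mul_nonneg (Real.exp_pos β).le (by linarith : (0:ℝ) ≤ Real.exp α - 1)),
      Real.exp_pos β, mul_nonneg (hp₁0 r) (Real.exp_pos β).le,
      mul_nonneg h0 (Real.exp_pos β).le]
  · intro r
    have h1 := hdiv r
    have h0 := hp₀0 r
    show (Real.exp β - 1) / (Real.exp (α + β) - 1) * p₀ r
        + (Real.exp (α + β) - Real.exp β) / (Real.exp (α + β) - 1) * p₁ r ≤ Real.exp β * p₁ r
    rw [div_mul_eq_mul_div, div_mul_eq_mul_div, ← add_div, div_le_iff₀ hD]
    nlinarith [mul_le_mul_of_nonneg_left h1 (by linarith : (0:ℝ) ≤ Real.exp β - 1)]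
end

section
/- Let (Ω, ℱ, P) be a probability space with a filtration ∅ = ℱ₀ ⊆ ℱ₁ ⊆ … ⊆ ℱ_k = ℱ. For each i ∈ {1,…,k} let X_i, A_i, B_i be real-valued random variables such that X_i is ℱ_i-measurable, A_i and B_i are ℱ_{i−1}-measurable, E[X_i | ℱ_{i−1}] = 0, and A_i ≤ X_i ≤ B_i almost surely. Let Y_k := ∑_{i=1}^{k} X_i. Then for all ε₁, ε₂ > 0, P( Y_k ≥ ε₁ and ∑_{i=1}^{k}(B_i − A_i)² ≤ ε₂² ) ≤ exp(−2·(ε₁/ε₂)²). -/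
open MeasureTheory Real


lemma hoeffding_phi_le {p : ℝ} (hp0 : 0 ≤ p) (hp1 : p ≤ 1) (u : ℝ) :
    -p * u + Real.log (1 - p + p * Real.exp u) ≤ u ^ 2 / 8 := by
  set D : ℝ → ℝ := fun u => 1 - p + p * Real.exp u with hD
  have hDpos : ∀ u, 0 < D u := by
    intro u
    rcases lt_or_eq_of_le hp0 with h | h
    · have : 0 < p * Real.exp u := mul_pos h (Real.exp_pos u)
      have : (0:ℝ) ≤ 1 - p := by linarith
      simp only [hD]; linarith
    · simp only [hD, ← h]; norm_num
  have hDderiv : ∀ u, HasDerivAt D (p * Real.exp u) u := by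
    intro u
    exact ((Real.hasDerivAt_exp u).const_mul p).const_add (1 - p)
  -- h u = u^2/8 - (-p*u + log (D u))
  set h : ℝ → ℝ := fun u => u ^ 2 / 8 - (-p * u + Real.log (D u)) with hh
  set φ : ℝ → ℝ := fun u => u / 4 + p - p * Real.exp u / D u with hφ
  have hhderiv : ∀ u, HasDerivAt h (φ u) u := by
    intro u
    have h1 : HasDerivAt (fun u : ℝ => u ^ 2 / 8) (u / 4) u := by
      have := (hasDerivAt_pow 2 u).div_const 8
      exact this.congr_deriv (by norm_num; ring)
    have h2 : HasDerivAt (fun u => Real.log (D u)) (p * Real.exp u / D u) u :=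
      (hDderiv u).log (ne_of_gt (hDpos u))
    have h3 : HasDerivAt (fun u => -p * u + Real.log (D u)) (-p + p * Real.exp u / D u) u := by
      exact (((hasDerivAt_id u).const_mul (-p)).add h2).congr_deriv (by ring)
    have := h1.sub h3
    exact this.congr_deriv (by simp only [hφ]; ring)
  have hφderiv : ∀ u, HasDerivAt φ (1 / 4 - p * Real.exp u * (1 - p) / (D u) ^ 2) u := by
    intro u
    have h1 : HasDerivAt (fun u : ℝ => u / 4 + p) (1 / 4) u := by
      simpa using ((hasDerivAt_id u).div_const 4).add_const p
    have h2 : HasDerivAt (fun u => p * Real.exp u / D u)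
        ((p * Real.exp u * D u - p * Real.exp u * (p * Real.exp u)) / (D u) ^ 2) u :=
      ((Real.hasDerivAt_exp u).const_mul p).div (hDderiv u) (ne_of_gt (hDpos u))
    have := h1.sub h2
    refine this.congr_deriv ?_
    have : (D u) ≠ 0 := ne_of_gt (hDpos u)
    simp only [hD]
    ring
  have hφ'nonneg : ∀ u, 0 ≤ 1 / 4 - p * Real.exp u * (1 - p) / (D u) ^ 2 := by
    intro u
    rw [sub_nonneg, div_le_iff₀ (by have := hDpos u; positivity)]
    have key : 4 * (p * Real.exp u * (1 - p)) ≤ (p * Real.exp u + (1 - p)) ^ 2 := by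
      nlinarith [sq_nonneg (p * Real.exp u - (1 - p))]
    have : (D u) ^ 2 = (p * Real.exp u + (1 - p)) ^ 2 := by simp only [hD]; ring
    rw [this]; linarith
  have hφmono : Monotone φ := by
    apply monotone_of_deriv_nonneg
    · intro u; exact (hφderiv u).differentiableAt
    · intro u; rw [(hφderiv u).deriv]; exact hφ'nonneg u
  have hφ0 : φ 0 = 0 := by
    simp only [hφ, hD]
    simp [Real.exp_zero]
  have hh0 : h 0 = 0 := by
    simp only [hh, hD]
    simp [Real.exp_zero]
  -- h monotone on Ici 0, antitone on Iic 0
  have hmono : MonotoneOn h (Set.Ici 0) := by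
    apply monotoneOn_of_deriv_nonneg (convex_Ici 0)
    · exact fun u _ => (hhderiv u).differentiableAt.continuousAt.continuousWithinAt
    · exact fun u _ => (hhderiv u).differentiableAt.differentiableWithinAt
    · intro u hu
      rw [(hhderiv u).deriv]
      rw [interior_Ici] at hu
      have := hφmono (le_of_lt hu)
      rw [hφ0] at this; exact this
  have hanti : AntitoneOn h (Set.Iic 0) := by
    apply antitoneOn_of_deriv_nonpos (convex_Iic 0)
    · exact fun u _ => (hhderiv u).differentiableAt.continuousAt.continuousWithinAt
    · exact fun u _ => (hhderiv u).differentiableAt.differentiableWithinAt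
    · intro u hu
      rw [(hhderiv u).deriv]
      rw [interior_Iic] at hu
      have := hφmono (le_of_lt hu)
      rw [hφ0] at this; exact this
  have : 0 ≤ h u := by
    rcases le_total 0 u with hu | hu
    · have := hmono (Set.self_mem_Ici) hu hu
      rw [hh0] at this; exact this
    · have := hanti hu (Set.self_mem_Iic) hu
      rw [hh0] at this; exact this
  simp only [hh] at this
  linarith

lemma hoeffding_alpha_le {a b t : ℝ} (ha : a ≤ 0) (hb : 0 ≤ b) (hab : a < b) :
    (b * Real.exp (t * a) - a * Real.exp (t * b)) / (b - a)
      ≤ Real.exp (t ^ 2 * (b - a) ^ 2 / 8) := by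
  have hba : 0 < b - a := by linarith
  set p : ℝ := -a / (b - a) with hp
  set u : ℝ := t * (b - a) with hu
  have hp0 : 0 ≤ p := div_nonneg (by linarith) hba.le
  have hp1 : p ≤ 1 := by
    rw [hp, div_le_one hba]; linarith
  have hta : t * a = -(p * u) := by
    rw [hp, hu]; field_simp
  have htb : t * b = u - p * u := by
    rw [hp, hu]; field_simp; ring
  have hDpos : 0 < 1 - p + p * Real.exp u := by
    rcases lt_or_eq_of_le hp0 with h | h
    · have : 0 < p * Real.exp u := mul_pos h (Real.exp_pos u)
      nlinarith
    · rw [← h]; norm_num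
  have key : -p * u + Real.log (1 - p + p * Real.exp u) ≤ u ^ 2 / 8 :=
    hoeffding_phi_le hp0 hp1 u
  have hLHS : (b * Real.exp (t * a) - a * Real.exp (t * b)) / (b - a)
      = Real.exp (-p * u + Real.log (1 - p + p * Real.exp u)) := by
    rw [Real.exp_add, Real.exp_log hDpos, hta, htb, Real.exp_sub,
      show -p * u = -(p * u) by ring, Real.exp_neg, hp]
    have hne : Real.exp (-a / (b - a) * u) ≠ 0 := Real.exp_ne_zero _
    field_simp
    ring
  rw [hLHS]
  apply Real.exp_le_exp.2
  calc -p * u + Real.log (1 - p + p * Real.exp u) ≤ u ^ 2 / 8 := key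
    _ = t ^ 2 * (b - a) ^ 2 / 8 := by rw [hu]; ring

lemma chord_bound {a b x t : ℝ} (hax : a ≤ x) (hxb : x ≤ b) (hab : a < b) :
    Real.exp (t * x) ≤ (Real.exp (t * a) - (Real.exp (t * b) - Real.exp (t * a)) / (b - a) * a)
      + (Real.exp (t * b) - Real.exp (t * a)) / (b - a) * x := by
  have hba : 0 < b - a := by linarith
  have hwt : (b - x) / (b - a) + (x - a) / (b - a) = 1 := by field_simp; ring
  have h1 : (0:ℝ) ≤ (b - x) / (b - a) := div_nonneg (by linarith) hba.le
  have h2 : (0:ℝ) ≤ (x - a) / (b - a) := div_nonneg (by linarith) hba.le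
  have hcvx := convexOn_exp.2 (Set.mem_univ (t * a)) (Set.mem_univ (t * b)) h1 h2 hwt
  simp only [smul_eq_mul] at hcvx
  have hcomb : (b - x) / (b - a) * (t * a) + (x - a) / (b - a) * (t * b) = t * x := by
    field_simp
    ring
  rw [hcomb] at hcvx
  calc Real.exp (t * x) ≤ (b - x) / (b - a) * Real.exp (t * a)
        + (x - a) / (b - a) * Real.exp (t * b) := hcvx
    _ = (Real.exp (t * a) - (Real.exp (t * b) - Real.exp (t * a)) / (b - a) * a)
      + (Real.exp (t * b) - Real.exp (t * a)) / (b - a) * x := by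
        field_simp
        ring

lemma sign_lemma {Ω : Type*} {m₀ : MeasurableSpace Ω} {P : Measure Ω} [IsProbabilityMeasure P]
    {G : MeasurableSpace Ω} (hG : G ≤ m₀) {X A : Ω → ℝ}
    (hXint : Integrable X P) (hcond : P[X | G] =ᵐ[P] 0)
    (hAmeas : Measurable[G] A) (hAX : ∀ᵐ ω ∂P, A ω ≤ X ω) :
    ∀ᵐ ω ∂P, A ω ≤ 0 := by
  set S : Set Ω := {ω | 0 < A ω} with hS
  have hSmeasG : MeasurableSet[G] S := hAmeas measurableSet_Ioi
  have hSmeas : MeasurableSet[m₀] S := hG S hSmeasG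
  have hint0 : ∫ ω in S, X ω ∂P = 0 := by
    rw [← setIntegral_condExp hG hXint hSmeasG]
    rw [@setIntegral_congr_ae Ω ℝ m₀ _ _ _ _ S P hSmeas (hcond.mono fun ω h _ => h)]
    simp
  have hXnn : 0 ≤ᵐ[P.restrict S] X := by
    refine (@ae_restrict_iff' Ω m₀ P S _ hSmeas).2 ?_
    filter_upwards [hAX] with ω hω hωS
    exact le_trans (le_of_lt hωS) hω
  have hX0 : X =ᵐ[P.restrict S] 0 :=
    (integral_eq_zero_iff_of_nonneg_ae hXnn (hXint.restrict)).1 hint0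
  have hXpos : ∀ᵐ ω ∂(P.restrict S), 0 < X ω := by
    refine (@ae_restrict_iff' Ω m₀ P S _ hSmeas).2 ?_
    filter_upwards [hAX] with ω hω hωS
    exact lt_of_lt_of_le hωS hω
  have hfalse : ∀ᵐ ω ∂(P.restrict S), False := by
    filter_upwards [hX0, hXpos] with ω h1 h2
    rw [h1] at h2; exact lt_irrefl 0 h2
  have hPS : P S = 0 := by
    rw [ae_iff] at hfalse
    simpa [Measure.restrict_apply_univ] using hfalse
  rw [ae_iff]
  convert hPS using 2
  ext ω
  simp [hS]
lemma trunc_aux (c : ℕ → ℝ) (hc : ∀ i, 0 ≤ c i) (e : ℝ) (he : 0 ≤ e) (n : ℕ) :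
    ∑ i ∈ Finset.Icc 1 n, (if (∑ j ∈ Finset.Icc 1 i, c j) ≤ e then (1:ℝ) else 0) * c i
      ≤ min (∑ j ∈ Finset.Icc 1 n, c j) e := by
  induction n with
  | zero => simp [he]
  | succ n ih =>
    rw [Finset.sum_Icc_succ_top (Nat.one_le_iff_ne_zero.2 (Nat.succ_ne_zero n)),
      Finset.sum_Icc_succ_top (Nat.one_le_iff_ne_zero.2 (Nat.succ_ne_zero n))]
    have hmin1 := min_le_left (∑ j ∈ Finset.Icc 1 n, c j) e
    have hmin2 := min_le_right (∑ j ∈ Finset.Icc 1 n, c j) e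
    by_cases h : (∑ j ∈ Finset.Icc 1 n, c j) + c (n+1) ≤ e
    · rw [if_pos h, one_mul, le_min_iff]
      exact ⟨by linarith, by linarith⟩
    · rw [if_neg h, zero_mul, add_zero, le_min_iff]
      exact ⟨by linarith [hc (n+1)], by linarith⟩
lemma key_step {Ω : Type*} {m₀ : MeasurableSpace Ω} {P : Measure Ω} [IsProbabilityMeasure P]
    {G : MeasurableSpace Ω} (hG : G ≤ m₀) {W A B F : Ω → ℝ} {t C K : ℝ}
    (ht : 0 ≤ t) (hC : 0 ≤ C) (hK : 0 ≤ K)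
    (hWmeas : Measurable[m₀] W)
    (hAmeas : Measurable[G] A) (hBmeas : Measurable[G] B) (hFmeas : Measurable[G] F)
    (hWint : Integrable W P)
    (hcond : P[W | G] =ᵐ[P] 0)
    (hbnd : ∀ᵐ ω ∂P, A ω ≤ W ω ∧ W ω ≤ B ω)
    (hABC : ∀ᵐ ω ∂P, |A ω| ≤ C ∧ |B ω| ≤ C)
    (hF : ∀ᵐ ω ∂P, 0 ≤ F ω ∧ F ω ≤ K) :
    ∫ ω, F ω * Real.exp (t * W ω) ∂P
      ≤ ∫ ω, F ω * Real.exp (t ^ 2 * (B ω - A ω) ^ 2 / 8) ∂P := by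
  -- sign facts
  have hA0 : ∀ᵐ ω ∂P, A ω ≤ 0 :=
    sign_lemma hG hWint hcond hAmeas (hbnd.mono fun ω h => h.1)
  have hB0 : ∀ᵐ ω ∂P, 0 ≤ B ω := by
    have hcond' : P[-W | G] =ᵐ[P] 0 := by
      refine (condExp_neg W G).trans ?_
      filter_upwards [hcond] with ω h
      simp [h]
    have := sign_lemma hG hWint.neg hcond' hBmeas.neg
      (hbnd.mono fun ω h => by simpa using neg_le_neg h.2)
    filter_upwards [this] with ω h
    simpa using h
  -- α, β
  set β : Ω → ℝ := fun ω => if A ω < B ω then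
      (Real.exp (t * B ω) - Real.exp (t * A ω)) / (B ω - A ω) else 0 with hβ
  set α : Ω → ℝ := fun ω => Real.exp (t * A ω) - β ω * A ω with hα
  have hβmeas : Measurable[G] β := by
    apply Measurable.ite (measurableSet_lt hAmeas hBmeas)
    · exact ((hBmeas.const_mul t).exp.sub (hAmeas.const_mul t).exp).div (hBmeas.sub hAmeas)
    · exact measurable_const
  have hαmeas : Measurable[G] α := (hAmeas.const_mul t).exp.sub (hβmeas.mul hAmeas)
  -- pointwise facts
  have hmain : ∀ᵐ ω ∂P, Real.exp (t * W ω) ≤ α ω + β ω * W ω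
      ∧ α ω ≤ Real.exp (t ^ 2 * (B ω - A ω) ^ 2 / 8)
      ∧ 0 ≤ β ω ∧ β ω ≤ t * Real.exp (t * C)
      ∧ |W ω| ≤ C := by
    filter_upwards [hbnd, hABC, hA0, hB0, hF] with ω hb hc ha0 hb0 hf
    obtain ⟨haw, hwb⟩ := hb
    obtain ⟨haC, hbC⟩ := hc
    have hWC : |W ω| ≤ C := by
      rw [abs_le] at haC hbC ⊢
      constructor <;> [linarith [haC.1]; linarith [hbC.2]]
    by_cases hab : A ω < B ω
    · have hβval : β ω = (Real.exp (t * B ω) - Real.exp (t * A ω)) / (B ω - A ω) := by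
        simp only [hβ, if_pos hab]
      have hαval : α ω = Real.exp (t * A ω) - β ω * A ω := rfl
      refine ⟨?_, ?_, ?_, ?_, hWC⟩
      · rw [hαval, hβval]
        exact chord_bound haw hwb hab
      · rw [hαval, hβval]
        have : Real.exp (t * A ω) -
            (Real.exp (t * B ω) - Real.exp (t * A ω)) / (B ω - A ω) * A ω
            = (B ω * Real.exp (t * A ω) - A ω * Real.exp (t * B ω)) / (B ω - A ω) := by
          have : B ω - A ω ≠ 0 := by linarith
          field_simp
          ring
        rw [this]
        exact hoeffding_alpha_le ha0 hb0 hab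
      · rw [hβval]
        apply div_nonneg _ (by linarith)
        have : t * A ω ≤ t * B ω := by nlinarith
        simp [Real.exp_le_exp.2 this]
      · rw [hβval]
        have hba : (0:ℝ) < B ω - A ω := by linarith
        rw [div_le_iff₀ hba]
        have h1 : Real.exp (t * B ω) - Real.exp (t * A ω)
            = Real.exp (t * B ω) * (1 - Real.exp (-(t * (B ω - A ω)))) := by
          rw [mul_sub, mul_one, ← Real.exp_add]
          ring_nf
        have h2 : 1 - Real.exp (-(t * (B ω - A ω))) ≤ t * (B ω - A ω) := by
          have := Real.add_one_le_exp (-(t * (B ω - A ω)))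
          linarith
        have h3 : Real.exp (t * B ω) ≤ Real.exp (t * C) := by
          apply Real.exp_le_exp.2
          have : B ω ≤ C := (abs_le.1 hbC).2
          nlinarith
        have h4 : (0:ℝ) ≤ t * (B ω - A ω) := by positivity
        calc Real.exp (t * B ω) - Real.exp (t * A ω)
            = Real.exp (t * B ω) * (1 - Real.exp (-(t * (B ω - A ω)))) := h1
          _ ≤ Real.exp (t * B ω) * (t * (B ω - A ω)) := by
              apply mul_le_mul_of_nonneg_left h2 (Real.exp_pos _).le
          _ ≤ Real.exp (t * C) * (t * (B ω - A ω)) := by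
              apply mul_le_mul_of_nonneg_right h3 h4
          _ = t * Real.exp (t * C) * (B ω - A ω) := by ring
    · -- A ω = B ω, hence A = W = B = 0
      have habe : A ω = B ω := le_antisymm (le_trans haw hwb) (not_lt.1 hab)
      have hA0' : A ω = 0 := le_antisymm ha0 (by rw [habe]; exact hb0)
      have hW0 : W ω = 0 := le_antisymm (by rw [← habe] at hwb; rw [← hA0']; exact hwb)
          (by rw [← hA0']; exact haw)
      have hβ0 : β ω = 0 := by simp only [hβ, if_neg hab]
      refine ⟨?_, ?_, ?_, ?_, hWC⟩
      · simp [hα, hβ0, hW0, hA0']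
      · simp only [hα, hβ0, hA0']
        simp only [mul_zero, zero_mul, sub_zero]
        rw [Real.exp_le_exp]
        positivity
      · simp [hβ0]
      · simp only [hβ0]; positivity
  -- measurability in m₀
  have hAm : Measurable[m₀] A := hAmeas.mono hG le_rfl
  have hBm : Measurable[m₀] B := hBmeas.mono hG le_rfl
  have hFm : Measurable[m₀] F := hFmeas.mono hG le_rfl
  have hβm : Measurable[m₀] β := hβmeas.mono hG le_rfl
  have hαm : Measurable[m₀] α := hαmeas.mono hG le_rfl
  -- integrability
  have hint_bdd : ∀ (g : Ω → ℝ), Measurable[m₀] g → (∃ c : ℝ, ∀ᵐ ω ∂P, |g ω| ≤ c) →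
      Integrable g P := by
    rintro g hg ⟨c, hc⟩
    exact Integrable.mono' (integrable_const c) hg.aestronglyMeasurable
      (hc.mono fun ω h => by simpa using h)
  have hintFe : Integrable (fun ω => F ω * Real.exp (t * W ω)) P := by
    apply hint_bdd _ (hFm.mul ((hWmeas.const_mul t).exp))
    refine ⟨K * Real.exp (t * C), ?_⟩
    filter_upwards [hF, hmain] with ω hf hm
    simp only [Pi.mul_apply]
    rw [abs_mul, abs_of_nonneg hf.1, abs_of_nonneg (Real.exp_pos _).le]
    have : Real.exp (t * W ω) ≤ Real.exp (t * C) := by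
      apply Real.exp_le_exp.2
      have := (abs_le.1 hm.2.2.2.2).2
      nlinarith
    exact mul_le_mul hf.2 this (Real.exp_pos _).le hK
  have hintFα : Integrable (fun ω => F ω * α ω) P := by
    apply hint_bdd _ (hFm.mul hαm)
    refine ⟨K * (Real.exp (t * C) + t * Real.exp (t * C) * C), ?_⟩
    filter_upwards [hF, hmain, hABC] with ω hf hm hc
    simp only [Pi.mul_apply]
    rw [abs_mul]
    apply mul_le_mul (by rw [abs_of_nonneg hf.1]; exact hf.2) _ (abs_nonneg _)  hK
    have : |α ω| ≤ Real.exp (t * C) + t * Real.exp (t * C) * C := by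
      rw [hα]
      refine le_trans (abs_sub _ _) ?_
      apply add_le_add
      · rw [abs_of_nonneg (Real.exp_pos _).le]
        apply Real.exp_le_exp.2
        have := (abs_le.1 hc.1).2
        nlinarith
      · rw [abs_mul]
        apply mul_le_mul _ hc.1 (abs_nonneg _) (by positivity)
        rw [abs_of_nonneg hm.2.2.1]
        exact hm.2.2.2.1
    exact this
  have hintFβW : Integrable (fun ω => F ω * β ω * W ω) P := by
    apply hint_bdd _ ((hFm.mul hβm).mul hWmeas)
    refine ⟨K * (t * Real.exp (t * C)) * C, ?_⟩
    filter_upwards [hF, hmain] with ω hf hm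
    simp only [Pi.mul_apply]
    rw [abs_mul, abs_mul]
    apply mul_le_mul _ hm.2.2.2.2 (abs_nonneg _) (by positivity)
    apply mul_le_mul (by rw [abs_of_nonneg hf.1]; exact hf.2) _ (abs_nonneg _) hK
    rw [abs_of_nonneg hm.2.2.1]
    exact hm.2.2.2.1
  have hintFE : Integrable (fun ω => F ω * Real.exp (t ^ 2 * (B ω - A ω) ^ 2 / 8)) P := by
    apply hint_bdd _ (hFm.mul (((hBm.sub hAm).pow_const 2).const_mul (t^2) |>.div_const 8).exp)
    refine ⟨K * Real.exp (t ^ 2 * (2 * C) ^ 2 / 8), ?_⟩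
    filter_upwards [hF, hABC] with ω hf hc
    simp only [Pi.mul_apply, Pi.sub_apply]
    rw [abs_mul, abs_of_nonneg hf.1, abs_of_nonneg (Real.exp_pos _).le]
    apply mul_le_mul hf.2 _ (Real.exp_pos _).le hK
    apply Real.exp_le_exp.2
    have h1 : |B ω - A ω| ≤ 2 * C := by
      refine le_trans (abs_sub _ _) ?_
      linarith [hc.1, hc.2]
    have h2 : (B ω - A ω) ^ 2 ≤ (2 * C) ^ 2 := by
      rw [← sq_abs]
      apply pow_le_pow_left₀ (abs_nonneg _) h1
    nlinarith [sq_nonneg t]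
  -- step 1 : ∫ F e^{tW} ≤ ∫ (F α + F β W)
  have step1 : ∫ ω, F ω * Real.exp (t * W ω) ∂P
      ≤ ∫ ω, (F ω * α ω + F ω * β ω * W ω) ∂P := by
    apply integral_mono_ae hintFe (hintFα.add hintFβW)
    filter_upwards [hF, hmain] with ω hf hm
    have := mul_le_mul_of_nonneg_left hm.1 hf.1
    calc F ω * Real.exp (t * W ω) ≤ F ω * (α ω + β ω * W ω) := this
      _ = F ω * α ω + F ω * β ω * W ω := by ring
  -- step 2 : ∫ F β W = 0
  have step2 : ∫ ω, F ω * β ω * W ω ∂P = 0 := by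
    have hsm : StronglyMeasurable[G] (fun ω => F ω * β ω) :=
      (hFmeas.mul hβmeas).stronglyMeasurable
    have hmul : (fun ω => F ω * β ω * W ω) = (fun ω => F ω * β ω) * W := rfl
    have hce : P[(fun ω => F ω * β ω) * W | G] =ᵐ[P] (fun ω => F ω * β ω) * P[W | G] :=
      condExp_mul_of_stronglyMeasurable_left hsm (by rw [← hmul]; exact hintFβW) hWint
    have : P[(fun ω => F ω * β ω) * W | G] =ᵐ[P] 0 := by
      refine hce.trans ?_
      filter_upwards [hcond] with ω h
      simp only [Pi.mul_apply, h, Pi.zero_apply, mul_zero]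
    calc ∫ ω, F ω * β ω * W ω ∂P = ∫ ω, ((fun ω => F ω * β ω) * W) ω ∂P := by rfl
      _ = ∫ ω, (P[(fun ω => F ω * β ω) * W | G]) ω ∂P := (integral_condExp hG).symm
      _ = ∫ ω, (0 : Ω → ℝ) ω ∂P := integral_congr_ae this
      _ = 0 := by simp
  -- step 3 : ∫ F α ≤ ∫ F e^{...}
  have step3 : ∫ ω, F ω * α ω ∂P
      ≤ ∫ ω, F ω * Real.exp (t ^ 2 * (B ω - A ω) ^ 2 / 8) ∂P := by
    apply integral_mono_ae hintFα hintFE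
    filter_upwards [hF, hmain] with ω hf hm
    exact mul_le_mul_of_nonneg_left hm.2.1 hf.1
  calc ∫ ω, F ω * Real.exp (t * W ω) ∂P
      ≤ ∫ ω, (F ω * α ω + F ω * β ω * W ω) ∂P := step1
    _ = ∫ ω, F ω * α ω ∂P + ∫ ω, F ω * β ω * W ω ∂P := integral_add hintFα hintFβW
    _ = ∫ ω, F ω * α ω ∂P := by rw [step2, add_zero]
    _ ≤ _ := step3


/-- **Azuma inequality extension for dynamic bounds** (Lemma D.5).
For a martingale-difference sequence `X_i` with predictable bounds `A_i ≤ X_i ≤ B_i`,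
`P(∑ X_i ≥ ε₁ and ∑ (B_i − A_i)² ≤ ε₂²) ≤ exp(−2(ε₁/ε₂)²)`. -/
theorem azuma_dynamic_bounds
    {Ω : Type*} {m₀ : MeasurableSpace Ω} (P : Measure Ω) [IsProbabilityMeasure P]
    (k : ℕ) (f : ℕ → MeasurableSpace Ω)
    (hf0 : f 0 = ⊥) (hfk : f k = m₀)
    (hmono : ∀ i j, i ≤ j → j ≤ k → f i ≤ f j)
    (X A B : ℕ → Ω → ℝ)
    (hXmeas : ∀ i ∈ Finset.Icc 1 k, Measurable[f i] (X i))
    (hAmeas : ∀ i ∈ Finset.Icc 1 k, Measurable[f (i - 1)] (A i))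
    (hBmeas : ∀ i ∈ Finset.Icc 1 k, Measurable[f (i - 1)] (B i))
    (hXint : ∀ i ∈ Finset.Icc 1 k, Integrable (X i) P)
    (hcond : ∀ i ∈ Finset.Icc 1 k, P[X i | f (i - 1)] =ᵐ[P] 0)
    (hbnd : ∀ i ∈ Finset.Icc 1 k, ∀ᵐ ω ∂P, A i ω ≤ X i ω ∧ X i ω ≤ B i ω)
    (ε₁ ε₂ : ℝ) (hε₁ : 0 < ε₁) (hε₂ : 0 < ε₂) :
    P {ω | ε₁ ≤ ∑ i ∈ Finset.Icc 1 k, X i ω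
        ∧ ∑ i ∈ Finset.Icc 1 k, (B i ω - A i ω) ^ 2 ≤ ε₂ ^ 2}
      ≤ ENNReal.ofReal (Real.exp (-2 * (ε₁ / ε₂) ^ 2)) := by
  classical
  have hle : ∀ i, i ≤ k → f i ≤ m₀ := fun i hi => hfk ▸ hmono i k hi le_rfl
  set t : ℝ := 4 * ε₁ / ε₂ ^ 2 with hts
  have ht : 0 ≤ t := by positivity
  set s : ℕ → Ω → ℝ := fun n ω => ∑ j ∈ Finset.Icc 1 n, (B j ω - A j ω) ^ 2 with hsdef
  set I : ℕ → Ω → ℝ := fun n ω => if s n ω ≤ ε₂ ^ 2 then 1 else 0 with hIdef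
  set X' : ℕ → Ω → ℝ := fun i ω => I i ω * X i ω with hX'def
  set A' : ℕ → Ω → ℝ := fun i ω => I i ω * A i ω with hA'def
  set B' : ℕ → Ω → ℝ := fun i ω => I i ω * B i ω with hB'def
  have hI01 : ∀ n ω, I n ω = 0 ∨ I n ω = 1 := by
    intro n ω; by_cases h : s n ω ≤ ε₂ ^ 2
    · right; simp [hIdef, h]
    · left; simp [hIdef, h]
  -- measurability of s, I
  have hsmeas : ∀ i ∈ Finset.Icc 1 k, Measurable[f (i - 1)] (s i) := by
    intro i hi
    obtain ⟨hi1, hik⟩ := Finset.mem_Icc.1 hi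
    apply Finset.measurable_sum
    intro j hj
    obtain ⟨hj1, hji⟩ := Finset.mem_Icc.1 hj
    have hjk : j ∈ Finset.Icc 1 k := Finset.mem_Icc.2 ⟨hj1, le_trans hji hik⟩
    have hle' : f (j - 1) ≤ f (i - 1) := hmono _ _ (by omega) (by omega)
    exact (((hBmeas j hjk).mono hle' le_rfl).sub
      ((hAmeas j hjk).mono hle' le_rfl)).pow_const 2
  have hImeas : ∀ i ∈ Finset.Icc 1 k, Measurable[f (i - 1)] (I i) := by
    intro i hi
    exact Measurable.ite (measurableSet_le (hsmeas i hi) measurable_const)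
      measurable_const measurable_const
  have hX'measfi : ∀ i ∈ Finset.Icc 1 k, Measurable[f i] (X' i) := by
    intro i hi
    obtain ⟨hi1, hik⟩ := Finset.mem_Icc.1 hi
    exact ((hImeas i hi).mono (hmono _ _ (by omega) hik) le_rfl).mul (hXmeas i hi)
  have hA'meas : ∀ i ∈ Finset.Icc 1 k, Measurable[f (i - 1)] (A' i) :=
    fun i hi => (hImeas i hi).mul (hAmeas i hi)
  have hB'meas : ∀ i ∈ Finset.Icc 1 k, Measurable[f (i - 1)] (B' i) :=
    fun i hi => (hImeas i hi).mul (hBmeas i hi)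
  -- sign facts
  have hsign : ∀ i ∈ Finset.Icc 1 k, ∀ᵐ ω ∂P, A i ω ≤ 0 ∧ 0 ≤ B i ω := by
    intro i hi
    obtain ⟨hi1, hik⟩ := Finset.mem_Icc.1 hi
    have hGle : f (i - 1) ≤ m₀ := hle _ (by omega)
    have h1 := sign_lemma hGle (hXint i hi) (hcond i hi) (hAmeas i hi)
      ((hbnd i hi).mono fun ω h => h.1)
    have hcond' : P[-(X i) | f (i - 1)] =ᵐ[P] 0 := by
      refine (condExp_neg (X i) (f (i - 1))).trans ?_
      filter_upwards [hcond i hi] with ω h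
      simp [h]
    have h2 := sign_lemma hGle (hXint i hi).neg hcond' (hBmeas i hi).neg
      ((hbnd i hi).mono fun ω h => by simpa using neg_le_neg h.2)
    filter_upwards [h1, h2] with ω u v
    exact ⟨u, by simpa using v⟩
  have hae : ∀ᵐ ω ∂P, ∀ i ∈ Finset.Icc 1 k,
      (A i ω ≤ X i ω ∧ X i ω ≤ B i ω) ∧ (A i ω ≤ 0 ∧ 0 ≤ B i ω) := by
    have h := (MeasureTheory.ae_ball_iff (Finset.Icc 1 k).countable_toSet).2
      (fun i hi => (hbnd i hi).and (hsign i hi))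
    filter_upwards [h] with ω hω i hi
    exact hω i (Finset.mem_coe.2 hi)
  -- pointwise consequences
  have hptwise : ∀ᵐ ω ∂P, ∀ i ∈ Finset.Icc 1 k,
      (A' i ω ≤ X' i ω ∧ X' i ω ≤ B' i ω) ∧ |A' i ω| ≤ ε₂ ∧ |B' i ω| ≤ ε₂ ∧ |X' i ω| ≤ ε₂ := by
    filter_upwards [hae] with ω hω i hi
    obtain ⟨⟨hax, hxb⟩, ha0, hb0⟩ := hω i hi
    obtain ⟨hi1, hik⟩ := Finset.mem_Icc.1 hi
    by_cases h : s i ω ≤ ε₂ ^ 2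
    · have hIi : I i ω = 1 := by simp [hIdef, h]
      have hci : (B i ω - A i ω) ^ 2 ≤ s i ω := by
        rw [hsdef]
        exact Finset.single_le_sum (f := fun j => (B j ω - A j ω) ^ 2)
          (fun j _ => sq_nonneg _) (Finset.mem_Icc.2 ⟨hi1, le_rfl⟩)
      have hBA : B i ω - A i ω ≤ ε₂ := by nlinarith
      have hAlow : -ε₂ ≤ A i ω := by linarith
      have hBhigh : B i ω ≤ ε₂ := by linarith
      simp only [hX'def, hA'def, hB'def, hIi, one_mul]
      refine ⟨⟨hax, hxb⟩, abs_le.2 ⟨hAlow, by linarith⟩, abs_le.2 ⟨by linarith, hBhigh⟩,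
        abs_le.2 ⟨by linarith, by linarith⟩⟩
    · have hIi : I i ω = 0 := by simp [hIdef, h]
      simp only [hX'def, hA'def, hB'def, hIi, zero_mul]
      simp [hε₂.le]
  -- integrability and conditional expectation of X'
  have hX'int : ∀ i ∈ Finset.Icc 1 k, Integrable (X' i) P := by
    intro i hi
    obtain ⟨hi1, hik⟩ := Finset.mem_Icc.1 hi
    refine Integrable.mono' (hXint i hi).abs
      (((hImeas i hi).mono (hle _ (by omega)) le_rfl).mul
        ((hXmeas i hi).mono (hle i hik) le_rfl)).aestronglyMeasurable ?_
    filter_upwards with ω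
    rcases hI01 i ω with h | h <;> simp [hX'def, h, abs_nonneg, abs_mul]
  have hX'cond : ∀ i ∈ Finset.Icc 1 k, P[X' i | f (i - 1)] =ᵐ[P] 0 := by
    intro i hi
    have hsm : StronglyMeasurable[f (i - 1)] (I i) := (hImeas i hi).stronglyMeasurable
    have hmul : X' i = (I i) * (X i) := rfl
    have hce := condExp_mul_of_stronglyMeasurable_left (μ := P) hsm
      (by rw [← hmul]; exact hX'int i hi) (hXint i hi)
    rw [hmul]
    refine hce.trans ?_
    filter_upwards [hcond i hi] with ω h
    simp only [Pi.mul_apply, h, Pi.zero_apply, mul_zero]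
  -- the product supermartingale
  set M : ℕ → Ω → ℝ := fun n ω => ∏ i ∈ Finset.Icc 1 n,
    Real.exp (t * X' i ω - t ^ 2 * (B' i ω - A' i ω) ^ 2 / 8) with hMdef
  have hMpos : ∀ n ω, 0 < M n ω :=
    fun n ω => Finset.prod_pos fun i _ => Real.exp_pos _
  have hMmeas : ∀ n, n ≤ k → Measurable[f n] (M n) := by
    intro n hnk
    apply Finset.measurable_prod
    intro j hj
    obtain ⟨hj1, hjn⟩ := Finset.mem_Icc.1 hj
    have hjk : j ∈ Finset.Icc 1 k := Finset.mem_Icc.2 ⟨hj1, le_trans hjn hnk⟩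
    have h1 : Measurable[f n] (X' j) := (hX'measfi j hjk).mono (hmono _ _ hjn hnk) le_rfl
    have hle2 : f (j - 1) ≤ f n := hmono _ _ (by omega) hnk
    have h2 : Measurable[f n] (A' j) := (hA'meas j hjk).mono hle2 le_rfl
    have h3 : Measurable[f n] (B' j) := (hB'meas j hjk).mono hle2 le_rfl
    exact ((h1.const_mul t).sub ((((h3.sub h2).pow_const 2).const_mul (t ^ 2)).div_const 8)).exp
  have hMbdd : ∀ n, n ≤ k → ∀ᵐ ω ∂P, M n ω ≤ Real.exp (t * ε₂) ^ n := by
    intro n hnk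
    filter_upwards [hptwise] with ω hω
    have : M n ω ≤ ∏ _i ∈ Finset.Icc 1 n, Real.exp (t * ε₂) := by
      apply Finset.prod_le_prod (fun i _ => (Real.exp_pos _).le)
      intro i hi
      obtain ⟨hi1, hin⟩ := Finset.mem_Icc.1 hi
      have hik : i ∈ Finset.Icc 1 k := Finset.mem_Icc.2 ⟨hi1, le_trans hin hnk⟩
      have hXb := (hω i hik).2.2.2
      apply Real.exp_le_exp.2
      have h1 : t * X' i ω ≤ t * ε₂ := by nlinarith [(abs_le.1 hXb).2]
      nlinarith [sq_nonneg (B' i ω - A' i ω), sq_nonneg t]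
    rw [Finset.prod_const, Nat.card_Icc] at this
    simpa using this
  have hMint : ∀ n, n ≤ k → Integrable (M n) P := by
    intro n hnk
    refine Integrable.mono' (integrable_const (Real.exp (t * ε₂) ^ n))
      ((hMmeas n hnk).mono (hle n hnk) le_rfl).aestronglyMeasurable ?_
    filter_upwards [hMbdd n hnk] with ω h
    rw [Real.norm_eq_abs, abs_of_pos (hMpos n ω)]
    exact h
  -- induction: ∫ M n ≤ 1
  have hMle : ∀ n, n ≤ k → ∫ ω, M n ω ∂P ≤ 1 := by
    intro n
    induction n with
    | zero =>
      intro _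
      simp [hMdef]
    | succ n ih =>
      intro hnk
      have hn : n ≤ k := le_trans (Nat.le_succ n) hnk
      have hik : n + 1 ∈ Finset.Icc 1 k := Finset.mem_Icc.2 ⟨Nat.succ_le_succ (Nat.zero_le n), hnk⟩
      have hred : n + 1 - 1 = n := rfl
      set F : Ω → ℝ := fun ω =>
        M n ω * Real.exp (-(t ^ 2 * (B' (n+1) ω - A' (n+1) ω) ^ 2 / 8)) with hFdef
      have hFmeas : Measurable[f n] F := by
        have h2 : Measurable[f n] (A' (n+1)) := by
          have := hA'meas (n+1) hik; rwa [hred] at this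
        have h3 : Measurable[f n] (B' (n+1)) := by
          have := hB'meas (n+1) hik; rwa [hred] at this
        exact (hMmeas n hn).mul
          ((((((h3.sub h2).pow_const 2).const_mul (t ^ 2)).div_const 8).neg).exp)
      have hWmeas : Measurable[m₀] (X' (n+1)) :=
        (hX'measfi (n+1) hik).mono (hle (n+1) hnk) le_rfl
      have hAmeasG : Measurable[f n] (A' (n+1)) := by
        have := hA'meas (n+1) hik; rwa [hred] at this
      have hBmeasG : Measurable[f n] (B' (n+1)) := by
        have := hB'meas (n+1) hik; rwa [hred] at this
      have hcondG : P[X' (n+1) | f n] =ᵐ[P] 0 := by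
        have := hX'cond (n+1) hik; rwa [hred] at this
      have hbndG : ∀ᵐ ω ∂P, A' (n+1) ω ≤ X' (n+1) ω ∧ X' (n+1) ω ≤ B' (n+1) ω :=
        hptwise.mono fun ω hω => (hω (n+1) hik).1
      have hABC : ∀ᵐ ω ∂P, |A' (n+1) ω| ≤ ε₂ ∧ |B' (n+1) ω| ≤ ε₂ :=
        hptwise.mono fun ω hω => ⟨(hω (n+1) hik).2.1, (hω (n+1) hik).2.2.1⟩
      have hFbnd : ∀ᵐ ω ∂P, 0 ≤ F ω ∧ F ω ≤ Real.exp (t * ε₂) ^ n := by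
        filter_upwards [hMbdd n hn] with ω h
        constructor
        · exact mul_nonneg (hMpos n ω).le (Real.exp_pos _).le
        · calc F ω ≤ M n ω * 1 := by
                apply mul_le_mul_of_nonneg_left _ (hMpos n ω).le
                apply Real.exp_le_one_iff.2
                have : (0:ℝ) ≤ t ^ 2 * (B' (n+1) ω - A' (n+1) ω) ^ 2 / 8 := by positivity
                linarith
            _ = M n ω := mul_one _
            _ ≤ Real.exp (t * ε₂) ^ n := h
      have hkey := key_step (hle n hn) ht hε₂.le (by positivity) hWmeas hAmeasG hBmeasG
        hFmeas (hX'int (n+1) hik) hcondG hbndG hABC hFbnd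
      have heq1 : ∀ ω, M (n+1) ω = F ω * Real.exp (t * X' (n+1) ω) := by
        intro ω
        simp only [hMdef, hFdef]
        rw [Finset.prod_Icc_succ_top (Nat.succ_le_succ (Nat.zero_le n))]
        rw [show t * X' (n+1) ω - t ^ 2 * (B' (n+1) ω - A' (n+1) ω) ^ 2 / 8
          = -(t ^ 2 * (B' (n+1) ω - A' (n+1) ω) ^ 2 / 8) + t * X' (n+1) ω by ring,
          Real.exp_add]
        ring
      have heq2 : ∀ ω, F ω * Real.exp (t ^ 2 * (B' (n+1) ω - A' (n+1) ω) ^ 2 / 8) = M n ω := by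
        intro ω
        simp only [hFdef]
        rw [mul_assoc, ← Real.exp_add]
        simp
      calc ∫ ω, M (n+1) ω ∂P = ∫ ω, F ω * Real.exp (t * X' (n+1) ω) ∂P := by
            apply integral_congr_ae
            filter_upwards with ω
            exact heq1 ω
        _ ≤ ∫ ω, F ω * Real.exp (t ^ 2 * (B' (n+1) ω - A' (n+1) ω) ^ 2 / 8) ∂P := hkey
        _ = ∫ ω, M n ω ∂P := by
            apply integral_congr_ae
            filter_upwards with ω
            exact heq2 ω
        _ ≤ 1 := ih hn
  -- the truncated sum
  set Y' : Ω → ℝ := fun ω => ∑ i ∈ Finset.Icc 1 k, X' i ω with hY'def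
  have hY'meas : Measurable[m₀] Y' := by
    apply Finset.measurable_sum
    intro i hi
    exact (hX'measfi i hi).mono (hle i (Finset.mem_Icc.1 hi).2) le_rfl
  have hY'bdd : ∀ᵐ ω ∂P, |Y' ω| ≤ k * ε₂ := by
    filter_upwards [hptwise] with ω hω
    calc |Y' ω| ≤ ∑ i ∈ Finset.Icc 1 k, |X' i ω| := Finset.abs_sum_le_sum_abs _ _
      _ ≤ ∑ _i ∈ Finset.Icc 1 k, ε₂ := Finset.sum_le_sum fun i hi => (hω i hi).2.2.2
      _ = k * ε₂ := by rw [Finset.sum_const, Nat.card_Icc]; simp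
  have hexpint : Integrable (fun ω => Real.exp (t * Y' ω)) P := by
    refine Integrable.mono' (integrable_const (Real.exp (t * (k * ε₂))))
      ((hY'meas.const_mul t).exp).aestronglyMeasurable ?_
    filter_upwards [hY'bdd] with ω h
    rw [Real.norm_eq_abs, abs_of_pos (Real.exp_pos _)]
    apply Real.exp_le_exp.2
    nlinarith [(abs_le.1 h).2]
  -- pointwise bound on the quadratic variation of truncated sequence
  have hqv : ∀ ω, ∑ i ∈ Finset.Icc 1 k, (B' i ω - A' i ω) ^ 2 ≤ ε₂ ^ 2 := by
    intro ω
    have heq : ∀ i, (B' i ω - A' i ω) ^ 2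
        = (if (∑ j ∈ Finset.Icc 1 i, (B j ω - A j ω) ^ 2) ≤ ε₂ ^ 2 then (1:ℝ) else 0)
          * (B i ω - A i ω) ^ 2 := by
      intro i
      simp only [hB'def, hA'def, hIdef, hsdef]
      by_cases h : (∑ j ∈ Finset.Icc 1 i, (B j ω - A j ω) ^ 2) ≤ ε₂ ^ 2
      · simp [h]
      · simp [h]
    calc ∑ i ∈ Finset.Icc 1 k, (B' i ω - A' i ω) ^ 2
        = ∑ i ∈ Finset.Icc 1 k, (if (∑ j ∈ Finset.Icc 1 i, (B j ω - A j ω) ^ 2) ≤ ε₂ ^ 2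
            then (1:ℝ) else 0) * (B i ω - A i ω) ^ 2 :=
          Finset.sum_congr rfl fun i _ => heq i
      _ ≤ min (∑ j ∈ Finset.Icc 1 k, (B j ω - A j ω) ^ 2) (ε₂ ^ 2) :=
          trunc_aux _ (fun i => sq_nonneg _) _ (by positivity) k
      _ ≤ ε₂ ^ 2 := min_le_right _ _
  -- Chernoff bound on mgf
  have hmgf : ∫ ω, Real.exp (t * Y' ω) ∂P ≤ Real.exp (t ^ 2 * ε₂ ^ 2 / 8) := by
    have hpt : ∀ ω, Real.exp (t * Y' ω) ≤ M k ω * Real.exp (t ^ 2 * ε₂ ^ 2 / 8) := by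
      intro ω
      have hMk : M k ω = Real.exp (t * Y' ω
          - t ^ 2 / 8 * ∑ i ∈ Finset.Icc 1 k, (B' i ω - A' i ω) ^ 2) := by
        simp only [hMdef, hY'def]
        rw [← Real.exp_sum]
        congr 1
        rw [Finset.sum_sub_distrib, Finset.mul_sum, Finset.mul_sum]
        congr 1
        apply Finset.sum_congr rfl
        intro i _
        ring
      rw [hMk, ← Real.exp_add]
      apply Real.exp_le_exp.2
      have := hqv ω
      nlinarith [sq_nonneg t]
    calc ∫ ω, Real.exp (t * Y' ω) ∂P
        ≤ ∫ ω, M k ω * Real.exp (t ^ 2 * ε₂ ^ 2 / 8) ∂P := by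
          apply integral_mono_ae hexpint ((hMint k le_rfl).mul_const _)
          filter_upwards with ω
          exact hpt ω
      _ = (∫ ω, M k ω ∂P) * Real.exp (t ^ 2 * ε₂ ^ 2 / 8) := integral_mul_const _ _
      _ ≤ 1 * Real.exp (t ^ 2 * ε₂ ^ 2 / 8) := by
          apply mul_le_mul_of_nonneg_right (hMle k le_rfl) (Real.exp_pos _).le
      _ = Real.exp (t ^ 2 * ε₂ ^ 2 / 8) := one_mul _
  -- event inclusion
  have hsub : {ω | ε₁ ≤ ∑ i ∈ Finset.Icc 1 k, X i ω
        ∧ ∑ i ∈ Finset.Icc 1 k, (B i ω - A i ω) ^ 2 ≤ ε₂ ^ 2}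
      ⊆ {ω | ε₁ ≤ Y' ω} := by
    rintro ω ⟨h1, h2⟩
    have hIone : ∀ i ∈ Finset.Icc 1 k, I i ω = 1 := by
      intro i hi
      have hsk : s i ω ≤ ε₂ ^ 2 := by
        rw [hsdef]
        refine le_trans (Finset.sum_le_sum_of_subset_of_nonneg
          (Finset.Icc_subset_Icc_right (Finset.mem_Icc.1 hi).2) fun j _ _ => sq_nonneg _) h2
      simp [hIdef, hsk]
    have : Y' ω = ∑ i ∈ Finset.Icc 1 k, X i ω := by
      simp only [hY'def, hX'def]
      apply Finset.sum_congr rfl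
      intro i hi
      rw [hIone i hi, one_mul]
    simp only [Set.mem_setOf_eq, this]
    exact h1
  -- conclude via Chernoff/Markov
  calc P {ω | ε₁ ≤ ∑ i ∈ Finset.Icc 1 k, X i ω
        ∧ ∑ i ∈ Finset.Icc 1 k, (B i ω - A i ω) ^ 2 ≤ ε₂ ^ 2}
      ≤ P {ω | ε₁ ≤ Y' ω} := measure_mono hsub
    _ = ENNReal.ofReal ((P {ω | ε₁ ≤ Y' ω}).toReal) :=
        (ENNReal.ofReal_toReal (measure_ne_top _ _)).symm
    _ ≤ ENNReal.ofReal (Real.exp (-2 * (ε₁ / ε₂) ^ 2)) := by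
        apply ENNReal.ofReal_le_ofReal
        have hmark := ProbabilityTheory.measure_ge_le_exp_mul_mgf (X := Y') (μ := P)
          (t := t) ε₁ ht hexpint
        have hmgfdef : ProbabilityTheory.mgf Y' P t = ∫ ω, Real.exp (t * Y' ω) ∂P := rfl
        rw [hmgfdef] at hmark
        refine le_trans hmark ?_
        calc Real.exp (-t * ε₁) * ∫ ω, Real.exp (t * Y' ω) ∂P
            ≤ Real.exp (-t * ε₁) * Real.exp (t ^ 2 * ε₂ ^ 2 / 8) :=
              mul_le_mul_of_nonneg_left hmgf (Real.exp_pos _).le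
          _ = Real.exp (t ^ 2 * ε₂ ^ 2 / 8 - t * ε₁) := by rw [← Real.exp_add]; ring_nf
          _ = Real.exp (-2 * (ε₁ / ε₂) ^ 2) := by
              congr 1
              rw [hts]
              field_simp
              ring
end

section
/- Let η > 0, let a, b ∈ ℝ, and let 0 < δ ≤ 1. Let γ_a and γ_b denote the Gaussian probability measures on ℝ with means a and b respectively and common variance η². Then for every measurable set S ⊆ ℝ, γ_a(S) ≤ exp( (|a−b|/η)·√(2·ln(1/δ)) + (a−b)²/(2η²) )·γ_b(S) + δ. -/
open MeasureTheory ProbabilityTheory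

private lemma gpdf_ratio (η : ℝ) (hη : 0 < η) (a b x : ℝ) :
    gaussianPDFReal a ⟨η ^ 2, sq_nonneg η⟩ x
      = Real.exp (((x - b) ^ 2 - (x - a) ^ 2) / (2 * η ^ 2))
        * gaussianPDFReal b ⟨η ^ 2, sq_nonneg η⟩ x := by
  have h : Real.exp (-(x - a) ^ 2 / (2 * η ^ 2))
      = Real.exp (((x - b) ^ 2 - (x - a) ^ 2) / (2 * η ^ 2))
        * Real.exp (-(x - b) ^ 2 / (2 * η ^ 2)) := by
    rw [← Real.exp_add]
    congr 1
    field_simp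
    ring
  simp only [gaussianPDFReal]
  change _ * Real.exp (-(x - a) ^ 2 / (2 * η ^ 2)) = _ * (_ * Real.exp (-(x - b) ^ 2 / (2 * η ^ 2)))
  rw [h]
  ring

private lemma gauss_tail (η : ℝ) (hη : 0 < η) (a t s : ℝ) (ht : 0 ≤ t) (hs : s * s = 1) :
    gaussianReal a ⟨η ^ 2, sq_nonneg η⟩ {x | η * t ≤ s * (x - a)}
      ≤ ENNReal.ofReal (Real.exp (-t ^ 2 / 2)) := by
  have hv : (⟨η ^ 2, sq_nonneg η⟩ : NNReal) ≠ 0 := by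
    intro h
    have := congrArg NNReal.toReal h
    change η ^ 2 = 0 at this
    exact (pow_ne_zero 2 hη.ne') this
  rw [gaussianReal_apply _ hv]
  have hbd : ∀ x ∈ {x : ℝ | η * t ≤ s * (x - a)},
      gaussianPDF a ⟨η ^ 2, sq_nonneg η⟩ x
        ≤ ENNReal.ofReal (Real.exp (-t ^ 2 / 2))
            * gaussianPDF (a + s * t * η) ⟨η ^ 2, sq_nonneg η⟩ x := by
    intro x hx
    simp only [Set.mem_setOf_eq] at hx
    change ENNReal.ofReal (gaussianPDFReal a ⟨η ^ 2, sq_nonneg η⟩ x) ≤ ENNReal.ofReal _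
      * ENNReal.ofReal (gaussianPDFReal (a + s * t * η) ⟨η ^ 2, sq_nonneg η⟩ x)
    rw [← ENNReal.ofReal_mul (Real.exp_nonneg _)]
    refine ENNReal.ofReal_le_ofReal ?_
    rw [gpdf_ratio η hη a (a + s * t * η) x]
    refine mul_le_mul_of_nonneg_right ?_ (gaussianPDFReal_nonneg _ _ _)
    refine Real.exp_le_exp.mpr ?_
    have key : (x - (a + s * t * η)) ^ 2 - (x - a) ^ 2
        = t ^ 2 * η ^ 2 - 2 * t * η * (s * (x - a)) := by
      linear_combination (t ^ 2 * η ^ 2) * hs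
    rw [key]
    rw [div_le_div_iff₀ (by positivity) (by norm_num)]
    nlinarith [mul_le_mul_of_nonneg_left hx (mul_nonneg ht hη.le)]
  calc ∫⁻ x in {x : ℝ | η * t ≤ s * (x - a)}, gaussianPDF a ⟨η ^ 2, sq_nonneg η⟩ x
      ≤ ∫⁻ x in {x : ℝ | η * t ≤ s * (x - a)},
          ENNReal.ofReal (Real.exp (-t ^ 2 / 2))
            * gaussianPDF (a + s * t * η) ⟨η ^ 2, sq_nonneg η⟩ x :=
        setLIntegral_mono ((measurable_gaussianPDF _ _).const_mul _) hbd
    _ = ENNReal.ofReal (Real.exp (-t ^ 2 / 2))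
          * ∫⁻ x in {x : ℝ | η * t ≤ s * (x - a)},
              gaussianPDF (a + s * t * η) ⟨η ^ 2, sq_nonneg η⟩ x := by
        exact lintegral_const_mul _ (measurable_gaussianPDF _ _)
    _ ≤ ENNReal.ofReal (Real.exp (-t ^ 2 / 2)) * 1 := by
        gcongr
        rw [← lintegral_gaussianPDF_eq_one (a + s * t * η) hv]
        exact setLIntegral_le_lintegral _ _
    _ = _ := mul_one _

/-- **Gaussian mechanism is LBI** (core of Lemma 4.7).
For Gaussian measures `γ_a, γ_b` with means `a, b` and common variance `η²`, and every
`0 < δ ≤ 1`, every measurable set `S` satisfies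
`γ_a(S) ≤ exp((|a−b|/η)·√(2 ln(1/δ)) + (a−b)²/(2η²))·γ_b(S) + δ`. -/
theorem gaussian_mechanism_indistinguishable
    (η : ℝ) (hη : 0 < η) (a b : ℝ) (δ : ℝ) (hδ0 : 0 < δ) (hδ1 : δ ≤ 1)
    (S : Set ℝ) (hS : MeasurableSet S) :
    gaussianReal a ⟨η ^ 2, sq_nonneg η⟩ S
      ≤ ENNReal.ofReal
          (Real.exp ((|a - b| / η) * Real.sqrt (2 * Real.log (1 / δ))
            + (a - b) ^ 2 / (2 * η ^ 2))) *
        gaussianReal b ⟨η ^ 2, sq_nonneg η⟩ S + ENNReal.ofReal δ := by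
  have hv : (⟨η ^ 2, sq_nonneg η⟩ : NNReal) ≠ 0 := by
    intro h
    have := congrArg NNReal.toReal h
    change η ^ 2 = 0 at this
    exact (pow_ne_zero 2 hη.ne') this
  set v : NNReal := ⟨η ^ 2, sq_nonneg η⟩ with hvdef
  set t : ℝ := Real.sqrt (2 * Real.log (1 / δ)) with htdef
  have hlog : 0 ≤ Real.log (1 / δ) := by
    apply Real.log_nonneg
    rw [le_div_iff₀ hδ0]; linarith
  have ht0 : 0 ≤ t := Real.sqrt_nonneg _
  have ht2 : t ^ 2 = 2 * Real.log (1 / δ) := Real.sq_sqrt (by linarith)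
  set ε : ℝ := (|a - b| / η) * t + (a - b) ^ 2 / (2 * η ^ 2) with hεdef
  -- the "bad" set where the privacy loss exceeds ε
  set T : Set ℝ := {x | ε < ((x - b) ^ 2 - (x - a) ^ 2) / (2 * η ^ 2)} with hTdef
  have hTmeas : MeasurableSet T := by
    apply measurableSet_lt measurable_const
    fun_prop
  have hδexp : Real.exp (-t ^ 2 / 2) = δ := by
    rw [ht2]
    rw [show -(2 * Real.log (1 / δ)) / 2 = - Real.log (1 / δ) by ring]
    rw [Real.log_div one_ne_zero hδ0.ne', Real.log_one]
    simp [Real.exp_log hδ0]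
  -- bound on the bad set
  have htail : gaussianReal a v T ≤ ENNReal.ofReal δ := by
    by_cases hab : a = b
    · have : T = ∅ := by
        ext x
        simp only [hTdef, Set.mem_setOf_eq, Set.mem_empty_iff_false, iff_false, not_lt, hab]
        have : ε = (|b - b| / η) * t + (b - b) ^ 2 / (2 * η ^ 2) := by rw [hεdef, hab]
        rw [this]
        simp
      simp [this]
    · set s : ℝ := (a - b) / |a - b| with hsdef
      have hcpos : 0 < |a - b| := abs_pos.mpr (sub_ne_zero.mpr hab)
      have hs : s * s = 1 := by
        rw [hsdef, div_mul_div_comm, abs_mul_abs_self,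
          div_self (mul_self_ne_zero.mpr (sub_ne_zero.mpr hab))]
      have hsub : T ⊆ {x | η * t ≤ s * (x - a)} := by
        intro x hx
        simp only [hTdef, Set.mem_setOf_eq] at hx ⊢
        -- loss = (a-b)(x-a)/η² + (a-b)²/(2η²)
        have hloss : ((x - b) ^ 2 - (x - a) ^ 2) / (2 * η ^ 2)
            = (a - b) * (x - a) / η ^ 2 + (a - b) ^ 2 / (2 * η ^ 2) := by
          field_simp; ring
        rw [hloss, hεdef] at hx
        have h1 : (|a - b| / η) * t < (a - b) * (x - a) / η ^ 2 := by
          have : (a - b) ^ 2 = |a - b| ^ 2 := (sq_abs _).symm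
          nlinarith [hx]
        -- multiply by η²/|a-b|
        have h2 : |a - b| * (η * t) < (a - b) * (x - a) := by
          have := mul_lt_mul_of_pos_left h1 (by positivity : (0:ℝ) < η ^ 2)
          calc |a - b| * (η * t) = η ^ 2 * ((|a - b| / η) * t) := by
                field_simp
            _ < η ^ 2 * ((a - b) * (x - a) / η ^ 2) := this
            _ = (a - b) * (x - a) := by field_simp
        have : η * t ≤ ((a - b) * (x - a)) / |a - b| :=
          le_div_iff₀ hcpos |>.mpr (by linarith [mul_comm (|a - b|) (η * t)])
        calc η * t ≤ (a - b) * (x - a) / |a - b| := this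
          _ = s * (x - a) := by rw [hsdef]; ring
      calc gaussianReal a v T ≤ gaussianReal a v {x | η * t ≤ s * (x - a)} :=
            measure_mono hsub
        _ ≤ ENNReal.ofReal (Real.exp (-t ^ 2 / 2)) := gauss_tail η hη a t s ht0 hs
        _ = ENNReal.ofReal δ := by rw [hδexp]
  -- bound on the good set
  have hgood : gaussianReal a v (S \ T) ≤ ENNReal.ofReal (Real.exp ε) * gaussianReal b v S := by
    rw [gaussianReal_apply _ hv, gaussianReal_apply _ hv,
      ← lintegral_const_mul _ (measurable_gaussianPDF _ _)]
    refine le_trans (setLIntegral_mono ((measurable_gaussianPDF _ _).const_mul _) ?_)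
      (lintegral_mono_set Set.diff_subset)
    intro x hx
    simp only [hTdef, Set.mem_diff, Set.mem_setOf_eq, not_lt] at hx
    rw [gaussianPDF_def, gaussianPDF_def, ← ENNReal.ofReal_mul (Real.exp_nonneg _)]
    refine ENNReal.ofReal_le_ofReal ?_
    rw [gpdf_ratio η hη a b x]
    exact mul_le_mul_of_nonneg_right (Real.exp_le_exp.mpr hx.2)
      (gaussianPDFReal_nonneg _ _ _)
  calc gaussianReal a v S = gaussianReal a v (S \ T ∪ S ∩ T) := by
        rw [Set.diff_union_inter]
    _ ≤ gaussianReal a v (S \ T) + gaussianReal a v (S ∩ T) := measure_union_le _ _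
    _ ≤ gaussianReal a v (S \ T) + gaussianReal a v T := by
        gcongr
        exact Set.inter_subset_right
    _ ≤ ENNReal.ofReal (Real.exp ε) * gaussianReal b v S + ENNReal.ofReal δ := by
        gcongr
end
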